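/- arXiv:2507.13559 — 7 statements merged into one kernel-verified Lean document; each statement's English description precedes it below -/
import Mathlib

section
/- (Erbe–Zhang) Let $k \geq 1$ be an integer and $(Q^*_n)$ a nonnegative real sequence. If $\liminf_{n\to\infty} Q^*_n > \frac{k^k}{(k+1)^{k+1}}$, then every solution of the delay difference equation $\Delta y_n + Q^*_n y_{n-k} = 0$ is oscillatory. -/
/-- Bernoulli-type inequality: `(1+t)^k * (1 - k t) ≤ 1` for `t ≥ -1`. -/
private lemma bern_aux : ∀ (k : ℕ) (t : ℝ), -1 ≤ t → (1 + t) ^ k * (1 - (k : ℝ) * t) ≤ 1 := by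
  intro k
  induction k with
  | zero => intro t ht; simp
  | succ k ih =>
    intro t ht
    have h1 : (0:ℝ) ≤ 1 + t := by linarith
    by_cases hc : 1 - ((k:ℝ) + 1) * t ≤ 0
    · have : (1 + t) ^ (k+1) * (1 - ((k:ℕ)+1 : ℕ) * t) ≤ 0 := by
        push_cast
        exact mul_nonpos_of_nonneg_of_nonpos (pow_nonneg h1 _) hc
      linarith
    · push_neg at hc
      have hih := ih t ht
      have key : (1 + t) * (1 - ((k:ℝ) + 1) * t) ≤ 1 - (k:ℝ) * t := by
        nlinarith [sq_nonneg t, mul_nonneg (Nat.cast_nonneg (α := ℝ) k) (sq_nonneg t)]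
      have hpk : (0:ℝ) ≤ (1 + t) ^ k := pow_nonneg h1 _
      calc (1 + t) ^ (k+1) * (1 - ((k:ℕ)+1 : ℕ) * t)
          = (1 + t) ^ k * ((1 + t) * (1 - ((k:ℝ) + 1) * t)) := by push_cast; ring
        _ ≤ (1 + t) ^ k * (1 - (k:ℝ) * t) := mul_le_mul_of_nonneg_left key hpk
        _ ≤ 1 := hih

/-- AM–GM consequence: `d^k (1-d) ≤ k^k/(k+1)^(k+1)` for `0 ≤ d ≤ 1`. -/
private lemma amgm_aux (k : ℕ) (hk : 1 ≤ k) (d : ℝ) (hd0 : 0 ≤ d) (hd1 : d ≤ 1) :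
    d ^ k * (1 - d) ≤ (k : ℝ) ^ k / ((k : ℝ) + 1) ^ (k + 1) := by
  have hk0 : (0:ℝ) < k := by exact_mod_cast hk
  have hk1 : (0:ℝ) < (k:ℝ) + 1 := by linarith
  set t : ℝ := ((k:ℝ) + 1) * d / k - 1 with ht_def
  have ht : -1 ≤ t := by
    have : 0 ≤ ((k:ℝ) + 1) * d / k := by positivity
    simp only [ht_def]; linarith
  have h := bern_aux k t ht
  have e1 : 1 + t = ((k:ℝ) + 1) * d / k := by simp only [ht_def]; ring
  have e2 : 1 - (k:ℝ) * t = ((k:ℝ) + 1) * (1 - d) := by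
    simp only [ht_def]; field_simp; ring
  rw [e1, e2] at h
  rw [div_pow, div_mul_eq_mul_div, div_le_one (by positivity)] at h
  rw [le_div_iff₀ (by positivity)]
  calc d ^ k * (1 - d) * ((k:ℝ) + 1) ^ (k + 1)
      = (((k:ℝ) + 1) * d) ^ k * (((k:ℝ) + 1) * (1 - d)) := by rw [mul_pow, pow_succ]; ring
    _ ≤ (k:ℝ) ^ k := h

private lemma key_aux (k : ℕ) (hk : 1 ≤ k) (Q : ℤ → ℝ) (hQ : ∀ n, 0 ≤ Q n)
    (hlim : (k : ℝ) ^ k / ((k : ℝ) + 1) ^ (k + 1) < Filter.liminf Q Filter.atTop)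
    (z : ℤ → ℝ)
    (heq : ∀ n : ℤ, z (n + 1) - z n + Q n * z (n - k) = 0)
    (N : ℤ) (hpos : ∀ n, N ≤ n → 0 < z n) : False := by
  set c : ℝ := (k : ℝ) ^ k / ((k : ℝ) + 1) ^ (k + 1) with hc_def
  have hk0 : (0:ℝ) < k := by exact_mod_cast hk
  have hc0 : 0 < c := by positivity
  have hbdd : Filter.IsBoundedUnder (· ≥ ·) Filter.atTop Q :=
    ⟨0, Filter.eventually_map.mpr (Filter.Eventually.of_forall hQ)⟩
  set q : ℝ := (c + Filter.liminf Q Filter.atTop) / 2 with hq_def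
  have hcq : c < q := by simp only [hq_def]; linarith
  have hqL : q < Filter.liminf Q Filter.atTop := by simp only [hq_def]; linarith
  have hq0 : 0 < q := lt_trans hc0 hcq
  obtain ⟨NQ, hNQ⟩ := Filter.eventually_atTop.mp
    (Filter.eventually_lt_of_lt_liminf hqL hbdd)
  set ε : ℝ := q - c with hε_def
  have hε0 : 0 < ε := by simp only [hε_def]; linarith
  -- z is nonincreasing past N + k
  have hzle : ∀ n : ℤ, N + k ≤ n → z (n + 1) ≤ z n := by
    intro n hn
    have h1 : 0 < z (n - k) := hpos _ (by omega)
    have h2 : 0 ≤ Q n * z (n - k) := mul_nonneg (hQ n) h1.le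
    linarith [heq n]
  -- chain lemma
  have chain : ∀ (d : ℝ), 0 ≤ d → ∀ (Nm : ℤ), (∀ n, Nm ≤ n → z (n + 1) ≤ d * z n) →
      ∀ (j : ℕ) (n : ℤ), Nm + j ≤ n → z n ≤ d ^ j * z (n - j) := by
    intro d hd Nm hstep j
    induction j with
    | zero => intro n hn; simp
    | succ j ih =>
      intro n hn
      have h1 : Nm + (j:ℤ) ≤ n - 1 := by push_cast at hn; omega
      have h2 : Nm ≤ n - 1 := by omega
      have ih' := ih (n - 1) h1
      have hs := hstep (n - 1) h2
      have hs' : z n ≤ d * z (n - 1) := by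
        have : n - 1 + 1 = n := by ring
        rwa [this] at hs
      have : z n ≤ d * (d ^ j * z (n - 1 - j)) :=
        le_trans hs' (mul_le_mul_of_nonneg_left ih' hd)
      have e : n - 1 - (j:ℤ) = n - ((j:ℕ) + 1 : ℕ) := by push_cast; ring
      rw [e] at this
      calc z n ≤ d * (d ^ j * z (n - ((j:ℕ) + 1 : ℕ))) := this
        _ = d ^ (j + 1) * z (n - ((j:ℕ) + 1 : ℕ)) := by ring
  -- main induction
  have main : ∀ m : ℕ, ∃ Nm : ℤ, N + k ≤ Nm ∧
      ∀ n, Nm ≤ n → z (n + 1) ≤ (1 - (m:ℝ) * ε) * z n := by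
    intro m
    induction m with
    | zero =>
      refine ⟨N + k, le_refl _, fun n hn => ?_⟩
      simpa using hzle n hn
    | succ m ih =>
      obtain ⟨Nm, hNm1, hNm2⟩ := ih
      by_cases hd : 0 < 1 - (m:ℝ) * ε
      · set d : ℝ := 1 - (m:ℝ) * ε with hd_def
        have hd1 : d ≤ 1 := by
          have : 0 ≤ (m:ℝ) * ε := mul_nonneg (Nat.cast_nonneg m) hε0.le
          simp only [hd_def]; linarith
        have hdk : 0 < d ^ k := pow_pos hd k
        have hdk1 : d ^ k ≤ 1 := pow_le_one₀ hd.le hd1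
        refine ⟨max NQ (Nm + k), by omega, fun n hn => ?_⟩
        have hn1 : NQ ≤ n := le_trans (le_max_left _ _) hn
        have hn2 : Nm + (k:ℤ) ≤ n := le_trans (le_max_right _ _) hn
        have hch := chain d hd.le Nm hNm2 k n hn2
        have hposn : 0 < z n := hpos n (by omega)
        have hposn1 : 0 < z (n + 1) := hpos (n + 1) (by omega)
        have hposnk : 0 < z (n - k) := hpos (n - k) (by omega)
        have hQn : q < Q n := hNQ n hn1
        have hdiv : z n / d ^ k ≤ z (n - k) := by
          rw [div_le_iff₀ hdk]; nlinarith
        have step1 : z (n + 1) ≤ (1 - q / d ^ k) * z n := by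
          have h1 : q * z (n - k) ≤ Q n * z (n - k) :=
            mul_le_mul_of_nonneg_right hQn.le hposnk.le
          have h2 : q * (z n / d ^ k) ≤ q * z (n - k) :=
            mul_le_mul_of_nonneg_left hdiv hq0.le
          have e : (1 - q / d ^ k) * z n = z n - q * (z n / d ^ k) := by ring
          rw [e]; linarith [heq n]
        have ham := amgm_aux k hk d hd.le hd1
        have hkey : (1 - d + ε) * d ^ k ≤ q := by
          have h3 : ε * d ^ k ≤ ε := by nlinarith
          have h4 : d ^ k * (1 - d) ≤ c := ham
          simp only [hε_def] at h3 ⊢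
          nlinarith
        have hne2 : 1 - q / d ^ k ≤ d - ε := by
          have : 1 - d + ε ≤ q / d ^ k := (le_div_iff₀ hdk).mpr hkey
          linarith
        have hcast : (1:ℝ) - ((m:ℕ)+1 : ℕ) * ε = d - ε := by
          simp only [hd_def]; push_cast; ring
        rw [hcast]
        exact le_trans step1 (mul_le_mul_of_nonneg_right hne2 hposn.le)
      · exfalso
        push_neg at hd
        have h1 := hNm2 Nm le_rfl
        have h2 : 0 < z Nm := hpos Nm (by omega)
        have h3 : 0 < z (Nm + 1) := hpos (Nm + 1) (by omega)
        nlinarith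
  obtain ⟨m, hm⟩ := exists_nat_gt (1 / ε)
  obtain ⟨Nm, hNm1, hNm2⟩ := main m
  have h1 := hNm2 Nm le_rfl
  have h2 : 0 < z Nm := hpos Nm (by omega)
  have h3 : 0 < z (Nm + 1) := hpos (Nm + 1) (by omega)
  have hmε : 1 < (m:ℝ) * ε := (div_lt_iff₀ hε0).mp hm
  nlinarith

/-- (Erbe–Zhang) If `liminf Qₙ* > kᵏ/(k+1)^{k+1}`, every nonzero solution of
`Δ yₙ + Qₙ* y_{n-k} = 0` is oscillatory. -/
theorem stmt_5 (k : ℕ) (hk : 1 ≤ k) (Q : ℤ → ℝ) (hQ : ∀ n, 0 ≤ Q n)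
    (hlim : (k : ℝ) ^ k / ((k : ℝ) + 1) ^ (k + 1) < Filter.liminf Q Filter.atTop)
    (y : ℤ → ℝ)
    (heq : ∀ n : ℤ, y (n + 1) - y n + Q n * y (n - k) = 0)
    (hne : ∃ n, y n ≠ 0) :
    ∀ M : ℤ, ∃ n, M ≤ n ∧ y n * y (n + 1) ≤ 0 := by
  by_contra h
  push_neg at h
  obtain ⟨M, hM⟩ := h
  rcases lt_trichotomy (y M) 0 with hyM | hyM | hyM
  · refine key_aux k hk Q hQ hlim (fun n => -(y n))
      (fun n => by linear_combination -(heq n)) M ?_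
    exact Int.le_induction (motive := fun n _ => 0 < -(y n)) (by linarith) (fun n hn ih => by have := hM n hn; nlinarith)
  · have := hM M le_rfl
    rw [hyM] at this
    simp at this
  · refine key_aux k hk Q hQ hlim y heq M ?_
    exact Int.le_induction hyM (fun n hn ih => by have := hM n hn; nlinarith)
end

section
/- (Ladas–Philos–Sficas) Let $k \geq 1$ be an integer and $(Q^*_n)$ a nonnegative real sequence. If $\liminf_{n\to\infty} \sum_{j=n-k}^{n-1} Q^*_j > \left(\frac{k}{k+1}\right)^{k+1}$, then every solution of $\Delta y_n + Q^*_n y_{n-k} = 0$ is oscillatory. -/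
private lemma amgm' {ι : Type*} (T : Finset ι) (hT : T.Nonempty) (f : ι → ℝ)
    (hf : ∀ i ∈ T, 0 ≤ f i) :
    ∏ i ∈ T, f i ≤ ((∑ i ∈ T, f i) / T.card) ^ T.card := by
  have hN : (0:ℝ) < (T.card : ℝ) := by exact_mod_cast hT.card_pos
  have hw : ∑ _i ∈ T, (T.card : ℝ)⁻¹ = 1 := by
    rw [Finset.sum_const, nsmul_eq_mul]; field_simp
  have h := Real.geom_mean_le_arith_mean_weighted T (fun _ => (T.card : ℝ)⁻¹) f
    (fun i _ => by positivity) hw hf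
  rw [Real.finset_prod_rpow T f hf] at h
  have hP : 0 ≤ ∏ i ∈ T, f i := Finset.prod_nonneg hf
  have hRHS : ∑ i ∈ T, (T.card : ℝ)⁻¹ * f i = (∑ i ∈ T, f i) / T.card := by
    rw [← Finset.mul_sum]; ring
  rw [hRHS] at h
  have h2 := pow_le_pow_left₀ (Real.rpow_nonneg hP _) h T.card
  have h3 : (((∏ i ∈ T, f i) ^ ((T.card:ℝ)⁻¹)) ^ (T.card : ℕ)) = ∏ i ∈ T, f i := by
    rw [← Real.rpow_natCast ((∏ i ∈ T, f i) ^ ((T.card:ℝ)⁻¹)) T.card,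
      ← Real.rpow_mul hP, inv_mul_cancel₀ (ne_of_gt hN), Real.rpow_one]
  rw [h3] at h2
  exact h2

private lemma maxbound (k : ℕ) (hk : 1 ≤ k) (s : ℝ) (hs0 : 0 ≤ s) (hsk : s ≤ (k:ℝ)) :
    ((k:ℝ) - s) * s ^ k ≤ ((k:ℝ) / ((k:ℝ) + 1)) ^ (k+1) * (k:ℝ) ^ k := by
  have hk0 : (0:ℝ) < (k:ℝ) := by exact_mod_cast hk
  set f : ℕ → ℝ := fun i => if i = k then (k:ℝ) * ((k:ℝ) - s) else s with hf
  have hT : (Finset.range (k+1)).Nonempty := ⟨0, by simp⟩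
  have hfpos : ∀ i ∈ Finset.range (k+1), 0 ≤ f i := by
    intro i _
    by_cases h : i = k
    · simp only [hf, h, if_true]
      nlinarith
    · simp [hf, h, hs0]
  have hprodf : ∏ i ∈ Finset.range (k+1), f i = (k:ℝ) * ((k:ℝ) - s) * s ^ k := by
    rw [Finset.prod_range_succ]
    have hin : ∏ i ∈ Finset.range k, f i = s ^ k := by
      rw [Finset.prod_congr rfl (fun i hi => ?_), Finset.prod_const, Finset.card_range]
      simp [hf, Nat.ne_of_lt (Finset.mem_range.mp hi)]
    rw [hin]; simp [hf]; ring
  have hsumf : ∑ i ∈ Finset.range (k+1), f i = (k:ℝ)^2 := by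
    rw [Finset.sum_range_succ]
    have hin : ∑ i ∈ Finset.range k, f i = (k:ℝ) * s := by
      rw [Finset.sum_congr rfl (fun i hi => ?_), Finset.sum_const, Finset.card_range,
        nsmul_eq_mul]
      simp [hf, Nat.ne_of_lt (Finset.mem_range.mp hi)]
    rw [hin]; simp [hf]; ring
  have h := amgm' (Finset.range (k+1)) hT f hfpos
  rw [hprodf, hsumf, Finset.card_range] at h
  push_cast at h
  have hid : (((k:ℝ)^2) / ((k:ℝ)+1)) ^ (k+1)
      = (k:ℝ) * (((k:ℝ)/((k:ℝ)+1))^(k+1) * (k:ℝ)^k) := by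
    have h1 : ((k:ℝ)+1) ≠ 0 := by positivity
    field_simp
    ring
  rw [hid] at h
  rw [mul_assoc] at h
  exact (mul_le_mul_iff_right₀ hk0).mp h

/-- (Ladas–Philos–Sficas) If `liminf ∑_{j=n-k}^{n-1} Qⱼ* > (k/(k+1))^{k+1}`,
every nonzero solution of `Δ yₙ + Qₙ* y_{n-k} = 0` is oscillatory. -/
theorem stmt_6 (k : ℕ) (hk : 1 ≤ k) (Q : ℤ → ℝ) (hQ : ∀ n, 0 ≤ Q n)
    (hlim : ((k : ℝ) / ((k : ℝ) + 1)) ^ (k + 1) <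
      Filter.liminf (fun n : ℤ => ∑ j ∈ Finset.Ico (n - k) n, Q j) Filter.atTop)
    (y : ℤ → ℝ)
    (heq : ∀ n : ℤ, y (n + 1) - y n + Q n * y (n - k) = 0)
    (hne : ∃ n, y n ≠ 0) :
    ∀ M : ℤ, ∃ n, M ≤ n ∧ y n * y (n + 1) ≤ 0 := by
  by_contra hcon
  push_neg at hcon
  obtain ⟨M, hM⟩ := hcon
  -- hM : ∀ n, M ≤ n → 0 < y n * y (n + 1)
  set s0 : ℝ := if 0 < y M then 1 else -1 with hs0def
  set z : ℤ → ℝ := fun n => s0 * y n with hzdef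
  have hzsq : ∀ n, z n * z (n+1) = y n * y (n+1) := by
    intro n
    have : s0 * s0 = 1 := by
      by_cases h : 0 < y M <;> simp [hs0def, h]
    simp only [hzdef]; linear_combination (y n * y (n + 1)) * this
  have hz : ∀ n, M ≤ n → 0 < z n := by
    have base : 0 < z M := by
      by_cases h : 0 < y M
      · simpa [hzdef, hs0def, h] using h
      · have h0 := hM M le_rfl
        have hyM : y M < 0 := by
          rcases lt_trichotomy (y M) 0 with h' | h' | h'
          · exact h'
          · rw [h'] at h0; simp at h0
          · exact absurd h' h
        simp only [hzdef, hs0def, if_neg h]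
        nlinarith
    refine Int.le_induction base ?_
    intro n hn ih
    have h1 : 0 < z n * z (n+1) := by rw [hzsq]; exact hM n hn
    nlinarith
  have heqz : ∀ n : ℤ, z (n + 1) - z n + Q n * z (n - k) = 0 := by
    intro n
    simp only [hzdef]
    linear_combination s0 * heq n
  set u : ℤ → ℝ := fun n => z (n+1) / z n with hudef
  have hu1 : ∀ n : ℤ, M ≤ n → 0 < u n := by
    intro n hn
    exact div_pos (hz (n+1) (by omega)) (hz n hn)
  have hu2 : ∀ n : ℤ, M + k ≤ n → u n ≤ 1 := by
    intro n hn
    have h1 : 0 ≤ Q n * z (n - k) := mul_nonneg (hQ n) (hz (n - k) (by omega)).le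
    have h2 : z (n+1) ≤ z n := by linarith [heqz n]
    exact (div_le_one (hz n (by omega))).mpr h2
  have hzu : ∀ n : ℤ, M ≤ n → z (n+1) = u n * z n := by
    intro n hn
    simp only [hudef]
    exact (div_mul_cancel₀ (z (n+1)) (ne_of_gt (hz n hn))).symm
  have hprod : ∀ a : ℤ, M ≤ a → ∀ b : ℤ, a ≤ b →
      z b = z a * ∏ i ∈ Finset.Ico a b, u i := by
    intro a ha
    refine Int.le_induction ?_ ?_
    · simp
    · intro b hb ih
      have hins : Finset.Ico a (b+1) = insert b (Finset.Ico a b) := by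
        ext x; simp only [Finset.mem_Ico, Finset.mem_insert]; omega
      rw [hins, Finset.prod_insert (by simp), hzu b (le_trans ha hb), ih]
      ring
  have hQeq : ∀ n : ℤ, M + k + k ≤ n →
      Q n = (1 - u n) * ∏ i ∈ Finset.Ico (n - k) n, u i := by
    intro n hn
    have h1 : z n = z (n - k) * ∏ i ∈ Finset.Ico (n - k) n, u i :=
      hprod (n - k) (by omega) n (by omega)
    have h2 : Q n * z (n - k) = (1 - u n) * z n := by
      linear_combination heqz n - hzu n (by omega)
    have hzk : z (n - (k:ℤ)) ≠ 0 := ne_of_gt (hz _ (by omega))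
    have h5 : Q n * z (n - k) = ((1 - u n) * ∏ i ∈ Finset.Ico (n - k) n, u i) * z (n - k) := by
      rw [h2, h1]; ring
    exact mul_right_cancel₀ hzk h5
  have hcard : ∀ n : ℤ, (Finset.Ico (n - (k:ℤ)) n).card = k := by
    intro n; rw [Int.card_Ico]; omega
  -- liminf extraction
  set c : ℝ := ((k:ℝ) / ((k:ℝ) + 1)) ^ (k+1) with hcdef
  set L : ℝ := Filter.liminf (fun n : ℤ => ∑ j ∈ Finset.Ico (n - k) n, Q j) Filter.atTop with hL
  set α : ℝ := (c + L) / 2 with hα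
  have hcα : c < α := by simp only [hα]; linarith [hlim]
  have hαL : α < L := by simp only [hα]; linarith [hlim]
  have hbdd : Filter.IsBoundedUnder (· ≥ ·) Filter.atTop
      (fun n : ℤ => ∑ j ∈ Finset.Ico (n - k) n, Q j) :=
    Filter.isBoundedUnder_of ⟨0, fun n => Finset.sum_nonneg fun j _ => hQ j⟩
  obtain ⟨N1, hN1⟩ := Filter.eventually_atTop.mp (Filter.eventually_lt_of_lt_liminf hαL hbdd)
  set δ : ℝ := α - c with hδdef
  have hδ : 0 < δ := by simp only [hδdef]; linarith
  have hαpos : 0 < α := by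
    have : 0 < c := by positivity
    linarith
  have hsumpos : ∀ n : ℤ, M + k ≤ n → 0 < ∑ j ∈ Finset.Ico (n - (k:ℤ)) n, u j := by
    intro n hn
    refine Finset.sum_pos (fun j hj => hu1 j ?_) ⟨n - 1, ?_⟩
    · simp only [Finset.mem_Ico] at hj; omega
    · simp only [Finset.mem_Ico]; omega
  have key : ∀ m : ℕ, ∃ N2 : ℤ, ∀ n, N2 ≤ n →
      (∑ j ∈ Finset.Ico (n - (k:ℤ)) n, u j) ≤ (k:ℝ) - m * δ := by
    intro m
    induction m with
    | zero =>
      refine ⟨M + k + k, fun n hn => ?_⟩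
      push_cast
      have h1 : ∑ j ∈ Finset.Ico (n - (k:ℤ)) n, u j ≤ ∑ _j ∈ Finset.Ico (n - (k:ℤ)) n, (1:ℝ) :=
        Finset.sum_le_sum fun j hj => hu2 j (by simp only [Finset.mem_Ico] at hj; omega)
      rw [Finset.sum_const, hcard, nsmul_eq_mul, mul_one] at h1
      linarith
    | succ m ih =>
      obtain ⟨N2, hN2⟩ := ih
      set sm : ℝ := (k:ℝ) - m * δ with hsm
      by_cases hspos : 0 < sm
      · refine ⟨max N1 (max (N2 + k) (M + 3*k)), fun n hn => ?_⟩
        have hn1 : N1 ≤ n := le_trans (le_max_left _ _) hn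
        have hn2 : N2 + k ≤ n := le_trans (le_trans (le_max_left _ _) (le_max_right _ _)) hn
        have hn3 : M + 3*(k:ℤ) ≤ n := le_trans (le_trans (le_max_right _ _) (le_max_right _ _)) hn
        have hsmk : sm ≤ (k:ℝ) := by
          have : 0 ≤ (m:ℝ) * δ := by positivity
          simp only [hsm]; linarith
        -- inner product bound
        have hinner : ∀ j ∈ Finset.Ico (n - (k:ℤ)) n,
            ∏ i ∈ Finset.Ico (j - (k:ℤ)) j, u i ≤ (sm / k) ^ k := by
          intro j hj
          simp only [Finset.mem_Ico] at hj
          have hupos : ∀ i ∈ Finset.Ico (j - (k:ℤ)) j, 0 ≤ u i := by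
            intro i hi; simp only [Finset.mem_Ico] at hi
            exact (hu1 i (by omega)).le
          have h1 := amgm' (Finset.Ico (j - (k:ℤ)) j) ⟨j - 1, by simp only [Finset.mem_Ico]; omega⟩ u hupos
          rw [hcard] at h1
          have h2 : ∑ i ∈ Finset.Ico (j - (k:ℤ)) j, u i ≤ sm := hN2 j (by omega)
          have h3 : (0:ℝ) ≤ (∑ i ∈ Finset.Ico (j - (k:ℤ)) j, u i) / k := by
            have := (hsumpos j (by omega)).le
            positivity
          calc ∏ i ∈ Finset.Ico (j - (k:ℤ)) j, u i
              ≤ ((∑ i ∈ Finset.Ico (j - (k:ℤ)) j, u i) / k) ^ k := h1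
            _ ≤ (sm / k) ^ k := by
                refine pow_le_pow_left₀ h3 ?_ k
                gcongr
        -- main chain
        set S : ℝ := ∑ j ∈ Finset.Ico (n - (k:ℤ)) n, u j with hS
        have hQsum : ∑ j ∈ Finset.Ico (n - (k:ℤ)) n, Q j
            ≤ (sm / k) ^ k * ((k:ℝ) - S) := by
          have h1 : ∀ j ∈ Finset.Ico (n - (k:ℤ)) n,
              Q j ≤ (1 - u j) * (sm / k) ^ k := by
            intro j hj
            have hj' := Finset.mem_Ico.mp hj
            rw [hQeq j (by omega)]
            have h1u : 0 ≤ 1 - u j := by linarith [hu2 j (by omega)]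
            exact mul_le_mul_of_nonneg_left (hinner j hj) h1u
          calc ∑ j ∈ Finset.Ico (n - (k:ℤ)) n, Q j
              ≤ ∑ j ∈ Finset.Ico (n - (k:ℤ)) n, (1 - u j) * (sm / k) ^ k :=
                Finset.sum_le_sum h1
            _ = (sm / k) ^ k * ((k:ℝ) - S) := by
                rw [← Finset.sum_mul, Finset.sum_sub_distrib, Finset.sum_const, hcard,
                  nsmul_eq_mul, mul_one]
                ring
        have hαS : α < (sm / k) ^ k * ((k:ℝ) - S) := lt_of_lt_of_le (hN1 n hn1) hQsum
        have hkpos : (0:ℝ) < (k:ℝ) := by exact_mod_cast hk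
        have hkk : (0:ℝ) < (k:ℝ) ^ k := by positivity
        have h6 : α * (k:ℝ) ^ k < sm ^ k * ((k:ℝ) - S) := by
          have h7 := mul_lt_mul_of_pos_right hαS hkk
          have h8 : (sm / k) ^ k * ((k:ℝ) - S) * (k:ℝ) ^ k = sm ^ k * ((k:ℝ) - S) := by
            rw [div_pow]
            field_simp
          rw [h8] at h7
          exact h7
        have hmax := maxbound k hk sm hspos.le hsmk
        have hpow : sm ^ k ≤ (k:ℝ) ^ k := pow_le_pow_left₀ hspos.le hsmk k
        have hαcδ : α = c + δ := by simp only [hδdef]; ring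
        rw [hαcδ] at h6
        have h9 : sm ^ k * ((k:ℝ) - sm + δ) < sm ^ k * ((k:ℝ) - S) := by
          nlinarith [hmax, hpow, hδ.le, h6]
        have h10 : (k:ℝ) - sm + δ < (k:ℝ) - S :=
          (mul_lt_mul_iff_right₀ (pow_pos hspos k)).mp h9
        push_cast
        simp only [hsm] at h10
        linarith
      · -- sm ≤ 0 : contradiction with positivity of sums
        exfalso
        have h1 := hN2 (max N2 (M + k + k)) (le_max_left _ _)
        have h2 := hsumpos (max N2 (M + k + k)) (by
          have := le_max_right N2 (M + k + k); omega)
        push_neg at hspos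
        linarith
  -- final contradiction
  obtain ⟨m, hm⟩ := exists_nat_gt ((k:ℝ) / δ)
  obtain ⟨N2, hN2⟩ := key m
  have h1 := hN2 (max N2 (M + k + k)) (le_max_left _ _)
  have h2 := hsumpos (max N2 (M + k + k)) (by
    have := le_max_right N2 (M + k + k); omega)
  have h3 : (k:ℝ) < m * δ := by
    rw [div_lt_iff₀ hδ] at hm; linarith
  linarith
end

section
/- (Győri–Ladas) Let $\ell \geq 2$ be an integer and $(Q_n)$ a nonnegative real sequence. If either $\liminf_{n\to\infty} \sum_{s=n+1}^{n+\ell-1} Q_s > \left(\frac{\ell-1}{\ell}\right)^{\ell}$ or $\limsup_{n\to\infty} \sum_{s=n}^{n+\ell-1} Q_s > 1$, then every solution of the advanced difference equation $\Delta y_n - Q_n y_{n+\ell} = 0$ is oscillatory. -/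
set_option maxHeartbeats 1600000
open Filter

lemma gl_ico_insert (a b : ℤ) (h : a ≤ b) :
    Finset.Ico a (b+1) = insert b (Finset.Ico a b) := by
  ext x; simp only [Finset.mem_Ico, Finset.mem_insert]; omega

-- AM-GM for a finset product
lemma gl_amgm_prod {ι : Type*} (s : Finset ι) (f : ι → ℝ)
    (hf : ∀ j ∈ s, 0 ≤ f j) (hs : s.Nonempty) :
    ∏ j ∈ s, f j ≤ ((∑ j ∈ s, f j) / s.card) ^ s.card := by
  have hcard : (0:ℝ) < s.card := by
    exact_mod_cast Nat.cast_pos.mpr (Finset.card_pos.mpr hs)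
  have h := Real.geom_mean_le_arith_mean_weighted s (fun _ => ((s.card : ℝ))⁻¹) f
    (fun i _ => by positivity)
    (by rw [Finset.sum_const, nsmul_eq_mul]; field_simp) hf
  have hL : ∏ j ∈ s, f j ^ ((s.card:ℝ))⁻¹ = (∏ j ∈ s, f j) ^ ((s.card:ℝ))⁻¹ :=
    Real.finset_prod_rpow s f hf _
  have hR : ∑ j ∈ s, ((s.card:ℝ))⁻¹ * f j = (∑ j ∈ s, f j) / s.card := by
    rw [← Finset.mul_sum]; ring
  rw [hL, hR] at h
  have h2 := pow_le_pow_left₀ (Real.rpow_nonneg (Finset.prod_nonneg hf) _) h s.card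
  rwa [← Real.rpow_natCast ((∏ j ∈ s, f j) ^ ((s.card:ℝ))⁻¹) s.card,
    ← Real.rpow_mul (Finset.prod_nonneg hf), inv_mul_cancel₀ (ne_of_gt hcard),
    Real.rpow_one] at h2

-- scalar AM-GM : t (1-t)^m ≤ m^m/(m+1)^(m+1)
lemma gl_scalar (m : ℕ) (hm : 1 ≤ m) (t : ℝ) (ht0 : 0 ≤ t) (ht1 : t ≤ 1) :
    t * (1-t)^m ≤ (m:ℝ)^m / ((m:ℝ)+1)^(m+1) := by
  have hmpos : (0:ℝ) < m := by exact_mod_cast hm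
  set f : ℕ → ℝ := fun i => if i = 0 then (m:ℝ)*t else 1-t with hfdef
  have hf : ∀ j ∈ Finset.range (m+1), 0 ≤ f j := by
    intro j _; by_cases h : j = 0 <;> simp [hfdef, h]
    · positivity
    · linarith
  have h := gl_amgm_prod (Finset.range (m+1)) f hf ⟨0, by simp⟩
  have hprod : ∏ j ∈ Finset.range (m+1), f j = (m:ℝ)*t * (1-t)^m := by
    rw [Finset.prod_range_succ']
    simp [hfdef, mul_comm]
  have hsum : ∑ j ∈ Finset.range (m+1), f j = (m:ℝ) := by
    rw [Finset.sum_range_succ']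
    simp [hfdef, Finset.sum_const]
  rw [hprod, hsum, Finset.card_range] at h
  have : ((m:ℝ))/((m:ℕ)+1:ℕ) = (m:ℝ)/((m:ℝ)+1) := by push_cast; ring
  rw [this] at h
  rw [div_pow] at h
  have hgoal : (m:ℝ) * (t * (1-t)^m) ≤ (m:ℝ) * ((m:ℝ)^m / ((m:ℝ)+1)^(m+1)) := by
    calc (m:ℝ) * (t * (1-t)^m) = (m:ℝ)*t*(1-t)^m := by ring
    _ ≤ (m:ℝ)^(m+1) / ((m:ℝ)+1)^(m+1) := h
    _ = (m:ℝ) * ((m:ℝ)^m / ((m:ℝ)+1)^(m+1)) := by rw [pow_succ]; ring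
  exact le_of_mul_le_mul_left hgoal hmpos

lemma gl_key (ℓ : ℕ) (hℓ : 2 ≤ ℓ) (Q : ℤ → ℝ) (hQ : ∀ n, 0 ≤ Q n)
    (hlim :
      (((ℓ : ℝ) - 1) / (ℓ : ℝ)) ^ ℓ <
        Filter.liminf (fun n : ℤ => ∑ s ∈ Finset.Ico (n + 1) (n + ℓ), Q s) Filter.atTop ∨
      1 < Filter.limsup (fun n : ℤ => ∑ s ∈ Finset.Ico n (n + ℓ), Q s) Filter.atTop)
    (x : ℤ → ℝ) (heq : ∀ n : ℤ, x (n + 1) - x n - Q n * x (n + ℓ) = 0)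
    (M : ℤ) (hpos : ∀ n, M ≤ n → 0 < x n) : False := by
  have hℓ2 : (2:ℤ) ≤ (ℓ:ℤ) := by exact_mod_cast hℓ
  -- monotonicity
  have hmono : ∀ a, M ≤ a → ∀ b, a ≤ b → x a ≤ x b := by
    intro a ha
    refine Int.le_induction (le_refl _) ?_
    intro n hn ih
    have h1 := heq n
    have h2 : 0 < x (n + ℓ) := hpos _ (by omega)
    have h3 := hQ n
    nlinarith [mul_nonneg h3 h2.le]
  -- telescoping sum
  have hsum : ∀ a b : ℤ, a ≤ b → x b - x a = ∑ s ∈ Finset.Ico a b, Q s * x (s + ℓ) := by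
    intro a
    refine Int.le_induction (by simp) ?_
    intro n hn ih
    rw [gl_ico_insert a n hn, Finset.sum_insert (by simp)]
    have h1 := heq n
    linarith
  -- ratio w
  set w : ℤ → ℝ := fun n => x (n + ℓ) / x (n + 1) with hw
  have hfac : ∀ j, M ≤ j → x j = x (j+1) * (1 - Q j * w j) := by
    intro j hj
    have h1 : x (j+1) ≠ 0 := (hpos _ (by omega)).ne'
    have h2 := heq j
    have h3 : x (j+1) * (Q j * (x (j+ℓ) / x (j+1))) = Q j * x (j+ℓ) := by field_simp
    simp only [hw]
    rw [mul_sub, mul_one, h3]; linarith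
  have hfacpos : ∀ j, M ≤ j → 0 < 1 - Q j * w j := by
    intro j hj
    have h1 := hpos j hj
    have h2 := hpos (j+1) (by omega)
    have h3 := hfac j hj
    nlinarith
  have hprod : ∀ a, M ≤ a → ∀ b, a ≤ b →
      x a = x b * ∏ j ∈ Finset.Ico a b, (1 - Q j * w j) := by
    intro a ha
    refine Int.le_induction (by simp) ?_
    intro n hn ih
    rw [gl_ico_insert a n hn, Finset.prod_insert (by simp)]
    rw [ih, hfac n (by omega)]
    ring
  have hw1 : ∀ n, M ≤ n → 1 ≤ w n := by
    intro n hn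
    rw [hw]
    rw [le_div_iff₀ (hpos (n+1) (by omega))]
    simpa using hmono (n+1) (by omega) (n+ℓ) (by omega)
  rcases hlim with hlim | hlim
  · -- liminf case
    set m : ℝ := (((ℓ : ℝ) - 1) / (ℓ : ℝ)) ^ ℓ with hmdef
    have hlR : (2:ℝ) ≤ (ℓ:ℝ) := by exact_mod_cast hℓ
    have hmpos : 0 < m := by
      rw [hmdef]
      exact pow_pos (div_pos (by linarith) (by linarith)) ℓ
    set L := Filter.liminf (fun n : ℤ => ∑ s ∈ Finset.Ico (n + 1) (n + ℓ), Q s) Filter.atTop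
    set c : ℝ := (m + L) / 2 with hcdef
    have hc : m < c := by rw [hcdef]; linarith
    have hcL : c < L := by rw [hcdef]; linarith
    have hcpos : 0 < c := lt_trans hmpos hc
    have hbdd : Filter.IsBoundedUnder (· ≥ ·) Filter.atTop
        (fun n : ℤ => ∑ s ∈ Finset.Ico (n + 1) (n + ℓ), Q s) :=
      Filter.isBoundedUnder_of ⟨0, fun n => Finset.sum_nonneg fun s _ => hQ s⟩
    have hev := Filter.eventually_lt_of_lt_liminf hcL hbdd
    rw [Filter.eventually_atTop] at hev
    obtain ⟨N₁, hN₁⟩ := hev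
    set N : ℤ := max M N₁ with hN
    set K : ℝ := m / c with hK
    have hK0 : 0 < K := div_pos hmpos hcpos
    have hK1 : K < 1 := (div_lt_one hcpos).mpr hc
    -- the iteration step
    have hstep : ∀ a : ℝ, 0 < a → (∀ n, N ≤ n → a ≤ w n) → ∀ n, N ≤ n → a / K ≤ w n := by
      intro a ha hA n hn
      have hnM : M ≤ n := le_trans (le_max_left _ _) hn
      set s : Finset ℤ := Finset.Ico (n+1) (n+ℓ) with hs
      have hmem : ∀ j ∈ s, M ≤ j := by
        intro j hj; rw [hs, Finset.mem_Ico] at hj; omega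
      have hcard : (s.card : ℝ) = (ℓ:ℝ) - 1 := by
        have := Int.card_Ico_of_le (n+1) (n+ℓ) (by omega)
        have h2 : ((s.card : ℤ) : ℝ) = ((n+ℓ) - (n+1) : ℤ) := by rw [hs]; exact_mod_cast this
        push_cast at h2 ⊢; linarith
      have hP := hprod (n+1) (by omega) (n+ℓ) (by omega)
      set P : ℝ := ∏ j ∈ s, (1 - Q j * w j) with hPdef
      have hPpos : 0 < P := Finset.prod_pos fun j hj => hfacpos j (hmem j hj)
      have hwP : w n = 1 / P := by
        have h1 : x (n+1) ≠ 0 := (hpos _ (by omega)).ne'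
        rw [hw]
        field_simp
        linarith [hP]
      -- bound P by product with a
      have hfle : ∀ j ∈ s, 1 - Q j * w j ≤ 1 - Q j * a := by
        intro j hj
        have := hA j (by have := Finset.mem_Ico.mp hj; omega)
        nlinarith [hQ j]
      have hfnn : ∀ j ∈ s, (0:ℝ) ≤ 1 - Q j * w j := fun j hj => (hfacpos j (hmem j hj)).le
      have hPle : P ≤ ∏ j ∈ s, (1 - Q j * a) := Finset.prod_le_prod hfnn hfle
      have hfpos : ∀ j ∈ s, (0:ℝ) < 1 - Q j * a :=
        fun j hj => lt_of_lt_of_le (hfacpos j (hmem j hj)) (hfle j hj)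
      set σ : ℝ := ∑ j ∈ s, Q j with hσ
      have hcσ : c ≤ σ := (hN₁ n (le_trans (le_max_right _ _) hn)).le
      have hsumf : ∑ j ∈ s, (1 - Q j * a) = ((ℓ:ℝ) - 1) - a * σ := by
        rw [Finset.sum_sub_distrib, Finset.sum_const, ← hcard, hσ, Finset.mul_sum]
        simp [mul_comm]
      have hsnonempty : s.Nonempty := by
        rw [hs]; rw [Finset.nonempty_Ico]; omega
      have hsumpos : 0 < ((ℓ:ℝ) - 1) - a * σ := by
        rw [← hsumf]; exact Finset.sum_pos hfpos hsnonempty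
      have hac : a * c < (ℓ:ℝ) - 1 := by nlinarith
      -- AM-GM
      have hamgm := gl_amgm_prod s (fun j => 1 - Q j * a) (fun j hj => (hfpos j hj).le) hsnonempty
      set e : ℕ := ℓ - 1 with he
      have hcardN : s.card = e := by rw [hs, Int.card_Ico, he]; omega
      have heR : ((e:ℕ):ℝ) = (ℓ:ℝ) - 1 := by
        rw [he]; push_cast [Nat.cast_sub (by omega : 1 ≤ ℓ)]; ring
      have he1 : 1 ≤ e := by omega
      rw [hsumf, hcard, hcardN] at hamgm
      have hl1R : (0:ℝ) < (ℓ:ℝ) - 1 := by linarith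
      have haσ : a * c ≤ a * σ := by nlinarith
      have hbase1 : (0:ℝ) ≤ (((ℓ:ℝ) - 1) - a * σ) / ((ℓ:ℝ) - 1) :=
        div_nonneg hsumpos.le hl1R.le
      have hbasele : (((ℓ:ℝ) - 1) - a * σ) / ((ℓ:ℝ) - 1) ≤
          (((ℓ:ℝ) - 1) - a * c) / ((ℓ:ℝ) - 1) :=
        (div_le_div_iff_of_pos_right hl1R).mpr (by linarith)
      have hPle2 : P ≤ ((((ℓ:ℝ) - 1) - a * c) / ((ℓ:ℝ) - 1)) ^ e :=
        le_trans (le_trans hPle hamgm) (pow_le_pow_left₀ hbase1 hbasele e)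
      -- the scalar estimate
      set t : ℝ := a * c / ((ℓ:ℝ) - 1) with htdef
      have ht0 : 0 ≤ t := by positivity
      have ht1 : t ≤ 1 := by rw [htdef, div_le_one hl1R]; linarith
      have h1t : (1:ℝ) - t = (((ℓ:ℝ) - 1) - a * c) / ((ℓ:ℝ) - 1) := by
        rw [htdef]; field_simp
      have hscal := gl_scalar e he1 t ht0 ht1
      have hlE : (ℓ:ℝ) = (e:ℝ) + 1 := by rw [heR]; ring
      have hm2 : m = (e:ℝ)^(e+1) / ((e:ℝ)+1)^(e+1) := by
        rw [hmdef, show ℓ = e + 1 by omega, div_pow]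
        congr 2 <;> push_cast [Nat.cast_sub (by omega : 1 ≤ ℓ)] <;> ring
      have hfinal : a * ((((ℓ:ℝ) - 1) - a * c) / ((ℓ:ℝ) - 1)) ^ e ≤ K := by
        rw [← h1t, hK]
        have ha_eq : a = t * ((ℓ:ℝ) - 1) / c := by
          rw [htdef]; field_simp
        calc a * (1 - t)^e = (((ℓ:ℝ) - 1)/c) * (t * (1-t)^e) := by
              rw [ha_eq]; ring
          _ ≤ (((ℓ:ℝ) - 1)/c) * ((e:ℝ)^e / ((e:ℝ)+1)^(e+1)) := by
              apply mul_le_mul_of_nonneg_left hscal (by positivity)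
          _ = m / c := by
              rw [hm2, ← heR, pow_succ]; field_simp; ring
      -- conclude
      rw [hwP, div_le_div_iff₀ hK0 hPpos, one_mul]
      calc a * P ≤ a * ((((ℓ:ℝ) - 1) - a * c) / ((ℓ:ℝ) - 1)) ^ e :=
            mul_le_mul_of_nonneg_left hPle2 ha.le
        _ ≤ K := hfinal
    -- iterate the step
    have hiter : ∀ k : ℕ, ∀ n, N ≤ n → (1/K)^k ≤ w n := by
      intro k
      induction k with
      | zero => intro n hn; simpa using hw1 n (le_trans (le_max_left _ _) hn)
      | succ k ih =>
        intro n hn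
        have h := hstep ((1/K)^k) (by positivity) ih n hn
        calc (1/K)^(k+1) = (1/K)^k / K := by rw [pow_succ]; field_simp
          _ ≤ w n := h
    have h1K : 1 < 1/K := by rw [lt_div_iff₀ hK0]; linarith
    obtain ⟨k, hk⟩ := pow_unbounded_of_one_lt (w N) h1K
    exact absurd (hiter k N (le_refl N)) (not_le.mpr hk)
  · -- limsup case
    have hub : ∀ n, M ≤ n → (∑ s ∈ Finset.Ico n (n + ℓ), Q s) ≤ 1 := by
      intro n hn
      have h1 := hsum n (n+ℓ) (by omega)
      have h2 : ∑ s ∈ Finset.Ico n (n+ℓ), Q s * x (n+ℓ) ≤ ∑ s ∈ Finset.Ico n (n+ℓ), Q s * x (s+ℓ) := by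
        apply Finset.sum_le_sum
        intro s hs
        have hmem := Finset.mem_Ico.mp hs
        exact mul_le_mul_of_nonneg_left (hmono (n+ℓ) (by omega) (s+ℓ) (by omega)) (hQ s)
      rw [← Finset.sum_mul] at h2
      have h3 := hpos n hn
      have h4 := hpos (n+ℓ) (by omega : M ≤ n + ℓ)
      nlinarith
    have : Filter.limsup (fun n : ℤ => ∑ s ∈ Finset.Ico n (n + ℓ), Q s) Filter.atTop ≤ 1 := by
      apply Filter.limsup_le_of_le
      · exact Filter.IsBoundedUnder.isCoboundedUnder_le
          (Filter.isBoundedUnder_of ⟨0, fun n => Finset.sum_nonneg fun s _ => hQ s⟩)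
      · rw [Filter.eventually_atTop]
        exact ⟨M, hub⟩
    linarith


/-- (Győri–Ladas) Oscillation criterion for the advanced difference equation
`Δ yₙ - Qₙ y_{n+ℓ} = 0`. -/
theorem stmt_7 (ℓ : ℕ) (hℓ : 2 ≤ ℓ) (Q : ℤ → ℝ) (hQ : ∀ n, 0 ≤ Q n)
    (hlim :
      (((ℓ : ℝ) - 1) / (ℓ : ℝ)) ^ ℓ <
        Filter.liminf (fun n : ℤ => ∑ s ∈ Finset.Ico (n + 1) (n + ℓ), Q s) Filter.atTop ∨
      1 < Filter.limsup (fun n : ℤ => ∑ s ∈ Finset.Ico n (n + ℓ), Q s) Filter.atTop)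
    (y : ℤ → ℝ)
    (heq : ∀ n : ℤ, y (n + 1) - y n - Q n * y (n + ℓ) = 0)
    (hne : ∃ n, y n ≠ 0) :
    ∀ M : ℤ, ∃ n, M ≤ n ∧ y n * y (n + 1) ≤ 0 := by

  intro M
  by_contra hcon
  push_neg at hcon
  -- hcon : ∀ n, M ≤ n → 0 < y n * y (n+1)
  rcases lt_or_gt_of_ne (fun h : y M = 0 => by
      have := hcon M (le_refl M); rw [h] at this; simp at this) with hyM | hyM
  · -- y M < 0 : use -y
    have hposneg : ∀ n, M ≤ n → 0 < -y n := by
      refine Int.le_induction (by linarith) ?_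
      intro n hn ih
      have h2 := hcon n hn
      nlinarith
    exact gl_key ℓ hℓ Q hQ hlim (fun n => -y n)
      (fun n => by have h := heq n; ring_nf at h ⊢; linarith) M hposneg
  · have hpos : ∀ n, M ≤ n → 0 < y n := by
      refine Int.le_induction hyM ?_
      intro n hn ih
      have h2 := hcon n hn
      nlinarith
    exact gl_key ℓ hℓ Q hQ hlim y heq M hpos
end

section
/- (Öcalan–Akin oscillation) Let $\ell \geq 2$ be an integer and $(Q^*_n)$ a real sequence. If $\limsup_{n\to\infty} Q^*_n < -\frac{(\ell-1)^{\ell-1}}{\ell^{\ell}}$, then every solution of the advanced difference equation $\Delta y_n + Q^*_n y_{n+\ell} = 0$ is oscillatory. -/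
/-- Key AM-GM-type inequality: for `x ≥ 1`, `x - 1 ≤ (ℓ-1)^{ℓ-1}/ℓ^ℓ * x^ℓ`. -/
lemma oc_key (ℓ : ℕ) (hℓ : 2 ≤ ℓ) (x : ℝ) (hx : 1 ≤ x) :
    x - 1 ≤ ((ℓ : ℝ) - 1) ^ (ℓ - 1) / (ℓ : ℝ) ^ ℓ * x ^ ℓ := by
  have h2 : (2 : ℝ) ≤ (ℓ : ℝ) := by exact_mod_cast hℓ
  have hl1 : (1 : ℝ) ≤ (ℓ : ℝ) - 1 := by linarith
  have hlpos : (0 : ℝ) < (ℓ : ℝ) := by linarith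
  set s : ℝ := ((ℓ : ℝ) - 1) * x / ℓ with hs
  have hspos : 0 < s := by positivity
  have hber : 1 + (ℓ : ℝ) * (s - 1) ≤ (1 + (s - 1)) ^ ℓ := by
    have := one_add_mul_le_pow (a := s - 1) (by linarith) ℓ
    exact this
  rw [show (1 : ℝ) + (s - 1) = s by ring] at hber
  have hsl : s ^ ℓ = ((ℓ : ℝ) - 1) ^ ℓ * x ^ ℓ / (ℓ : ℝ) ^ ℓ := by
    rw [hs, div_pow, mul_pow]
  have h1 : ((ℓ : ℝ) - 1) * (x - 1) ≤ ((ℓ : ℝ) - 1) ^ ℓ * x ^ ℓ / (ℓ : ℝ) ^ ℓ := by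
    rw [← hsl]
    calc ((ℓ : ℝ) - 1) * (x - 1) = 1 + (ℓ : ℝ) * (s - 1) := by
          rw [hs]; field_simp; ring
      _ ≤ s ^ ℓ := hber
  have hpow : ((ℓ : ℝ) - 1) ^ ℓ = ((ℓ : ℝ) - 1) ^ (ℓ - 1) * ((ℓ : ℝ) - 1) := by
    rw [← pow_succ]
    congr 1
    omega
  have hlm1pos : (0 : ℝ) < (ℓ : ℝ) - 1 := by linarith
  rw [hpow] at h1
  have hrw : ((ℓ : ℝ) - 1) ^ (ℓ - 1) * ((ℓ : ℝ) - 1) * x ^ ℓ / (ℓ : ℝ) ^ ℓ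
      = ((ℓ : ℝ) - 1) * (((ℓ : ℝ) - 1) ^ (ℓ - 1) * x ^ ℓ / (ℓ : ℝ) ^ ℓ) := by ring
  rw [hrw] at h1
  have := (mul_le_mul_iff_right₀ hlm1pos).mp h1
  calc x - 1 ≤ ((ℓ : ℝ) - 1) ^ (ℓ - 1) * x ^ ℓ / (ℓ : ℝ) ^ ℓ := this
    _ = ((ℓ : ℝ) - 1) ^ (ℓ - 1) / (ℓ : ℝ) ^ ℓ * x ^ ℓ := by ring

/-- The auxiliary lower-bound sequence. -/
def ocSeq (c : ℝ) (ℓ : ℕ) : ℕ → ℝ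
  | 0 => 1
  | k + 1 => 1 + c * (ocSeq c ℓ k) ^ ℓ

/-- No eventually positive solution can exist. -/
lemma oc_no_pos (ℓ : ℕ) (hℓ : 2 ≤ ℓ) (ε : ℝ) (hε : 0 < ε) (Q z : ℤ → ℝ) (N : ℤ)
    (hQ : ∀ n, N ≤ n → Q n ≤ -(((ℓ : ℝ) - 1) ^ (ℓ - 1) / (ℓ : ℝ) ^ ℓ + ε))
    (heq : ∀ n : ℤ, z (n + 1) - z n + Q n * z (n + ℓ) = 0)
    (hpos : ∀ n, N ≤ n → 0 < z n) : False := by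
  set c₀ : ℝ := ((ℓ : ℝ) - 1) ^ (ℓ - 1) / (ℓ : ℝ) ^ ℓ with hc₀
  have h2 : (2 : ℝ) ≤ (ℓ : ℝ) := by exact_mod_cast hℓ
  have hc₀pos : 0 < c₀ := by
    apply div_pos
    · apply pow_pos; linarith
    · apply pow_pos; linarith
  set c : ℝ := c₀ + ε with hc
  have hcpos : 0 < c := by positivity
  set a : ℕ → ℝ := ocSeq c ℓ with ha
  -- step inequality
  have hstep : ∀ n, N ≤ n → z n + c * z (n + ℓ) ≤ z (n + 1) := by
    intro n hn
    have h1 := heq n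
    have h2' : Q n ≤ -c := hQ n hn
    have h3 : 0 < z (n + ℓ) := hpos _ (by omega)
    nlinarith
  -- a k ≥ 1
  have hage : ∀ k, 1 ≤ a k := by
    intro k
    induction k with
    | zero => simp [ha, ocSeq]
    | succ k ih =>
      have : 0 ≤ c * a k ^ ℓ := by positivity
      show (1 : ℝ) ≤ 1 + c * a k ^ ℓ
      linarith
  -- main claim: a k * z n ≤ z (n+1) for n ≥ N
  have hmain : ∀ k, ∀ n, N ≤ n → a k * z n ≤ z (n + 1) := by
    intro k
    induction k with
    | zero =>
      intro n hn
      have h3 : 0 < z (n + ℓ) := hpos _ (by omega)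
      have := hstep n hn
      have : z n ≤ z (n + 1) := by nlinarith
      simpa [ha, ocSeq] using this
    | succ k ih =>
      -- first: (a k)^j * z n ≤ z (n + j)
      have hpowstep : ∀ j : ℕ, ∀ n, N ≤ n → a k ^ j * z n ≤ z (n + (j : ℤ)) := by
        intro j
        induction j with
        | zero => intro n hn; simp
        | succ j ihj =>
          intro n hn
          have h1 := ihj n hn
          have h2' := ih (n + (j : ℤ)) (by omega)
          have hak : (0 : ℝ) ≤ a k := le_trans zero_le_one (hage k)
          have : a k * (a k ^ j * z n) ≤ a k * z (n + (j : ℤ)) :=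
            mul_le_mul_of_nonneg_left h1 hak
          have hcast : (n : ℤ) + ((j : ℤ) + 1) = (n + (j : ℤ)) + 1 := by ring
          calc a k ^ (j + 1) * z n = a k * (a k ^ j * z n) := by ring
            _ ≤ a k * z (n + (j : ℤ)) := this
            _ ≤ z ((n + (j : ℤ)) + 1) := h2'
            _ = z (n + ((j : ℤ) + 1)) := by rw [← hcast]
            _ = z (n + ((j + 1 : ℕ) : ℤ)) := by norm_cast
      intro n hn
      have hpl : a k ^ ℓ * z n ≤ z (n + (ℓ : ℤ)) := hpowstep ℓ n hn
      have hst := hstep n hn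
      have hzn : 0 < z n := hpos n hn
      have : (1 + c * a k ^ ℓ) * z n ≤ z (n + 1) := by nlinarith
      simpa [ha, ocSeq] using this
  -- growth: a (k+1) ≥ a k + ε
  have hgrow : ∀ k, a k + ε ≤ a (k + 1) := by
    intro k
    have hk := hage k
    have hkey := oc_key ℓ hℓ (a k) hk
    have hpl : (1 : ℝ) ≤ a k ^ ℓ := one_le_pow₀ hk
    show a k + ε ≤ 1 + c * a k ^ ℓ
    have : c * a k ^ ℓ = c₀ * a k ^ ℓ + ε * a k ^ ℓ := by rw [hc]; ring
    nlinarith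
  have hlin : ∀ k : ℕ, 1 + k * ε ≤ a k := by
    intro k
    induction k with
    | zero => simp [ha, ocSeq]
    | succ k ih =>
      have := hgrow k
      push_cast
      linarith
  -- contradiction
  have hzN : 0 < z N := hpos N le_rfl
  obtain ⟨k, hk⟩ := exists_nat_gt ((z (N + 1) / z N - 1) / ε)
  have h1 : a k * z N ≤ z (N + 1) := hmain k N le_rfl
  have h2' : 1 + (k : ℝ) * ε ≤ a k := hlin k
  have h3 : z (N + 1) / z N - 1 < (k : ℝ) * ε := by
    rw [div_lt_iff₀ hε] at hk
    linarith
  have h4 : z (N + 1) / z N < a k := by linarith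
  have h5 : z (N + 1) < a k * z N := by
    rw [div_lt_iff₀ hzN] at h4
    linarith
  linarith

/-- (Öcalan–Akin) If `limsup Qₙ* < -(ℓ-1)^{ℓ-1}/ℓ^ℓ`, every nonzero solution of
`Δ yₙ + Qₙ* y_{n+ℓ} = 0` is oscillatory. -/
theorem stmt_8 (ℓ : ℕ) (hℓ : 2 ≤ ℓ) (Q : ℤ → ℝ)
    (hlim : Filter.limsup Q Filter.atTop <
      -(((ℓ : ℝ) - 1) ^ (ℓ - 1) / (ℓ : ℝ) ^ ℓ))
    (y : ℤ → ℝ)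
    (heq : ∀ n : ℤ, y (n + 1) - y n + Q n * y (n + ℓ) = 0)
    (hne : ∃ n, y n ≠ 0) :
    ∀ M : ℤ, ∃ n, M ≤ n ∧ y n * y (n + 1) ≤ 0 := by
  by_contra h
  push_neg at h
  obtain ⟨M, hM⟩ := h
  set c₀ : ℝ := ((ℓ : ℝ) - 1) ^ (ℓ - 1) / (ℓ : ℝ) ^ ℓ with hc₀
  have h2 : (2 : ℝ) ≤ (ℓ : ℝ) := by exact_mod_cast hℓ
  have hc₀pos : 0 < c₀ := by
    apply div_pos
    · apply pow_pos; linarith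
    · apply pow_pos; linarith
  -- extract eventual bound from limsup
  rw [Filter.limsup_eq] at hlim
  set S := {a : ℝ | ∀ᶠ n in Filter.atTop, Q n ≤ a} with hS
  have hSne : S.Nonempty := by
    by_contra hne'
    rw [Set.not_nonempty_iff_eq_empty] at hne'
    rw [hne', Real.sInf_empty] at hlim
    linarith
  have hSbdd : BddBelow S := by
    by_contra hb
    rw [Real.sInf_of_not_bddBelow hb] at hlim
    linarith
  obtain ⟨b, hbS, hb⟩ := (csInf_lt_iff hSbdd hSne).mp hlim
  set ε : ℝ := -c₀ - b with hεdef
  have hε : 0 < ε := by simp only [hεdef]; linarith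
  have hbval : b = -(c₀ + ε) := by rw [hεdef]; ring
  obtain ⟨N₀, hN₀⟩ := Filter.eventually_atTop.mp hbS
  set N : ℤ := max M N₀ with hN
  have hQN : ∀ n, N ≤ n → Q n ≤ -(c₀ + ε) := by
    intro n hn
    rw [← hbval]
    exact hN₀ n (le_trans (le_max_right M N₀) hn)
  have hsign : ∀ n, N ≤ n → 0 < y n * y (n + 1) := by
    intro n hn
    exact hM n (le_trans (le_max_left M N₀) hn)
  have hyN : y N ≠ 0 := by
    intro h0
    have := hsign N le_rfl
    rw [h0] at this
    simp at this
  rcases lt_or_gt_of_ne hyN with hneg | hpos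
  · -- y N < 0 : use z = -y
    have hzpos : ∀ n, N ≤ n → 0 < -y n :=
      Int.le_induction (by linarith) (fun n hn ih => by
        have hs := hsign n hn; nlinarith)
    exact oc_no_pos ℓ hℓ ε hε Q (fun n => -y n) N hQN
      (fun n => by have := heq n; linarith) hzpos
  · have hzpos : ∀ n, N ≤ n → 0 < y n :=
      Int.le_induction hpos (fun n hn ih => by
        have hs := hsign n hn; nlinarith)
    exact oc_no_pos ℓ hℓ ε hε Q y N hQN heq hzpos
end

section
/- (Győri–Ladas nonoscillation) Let $k \geq 1$ be an integer and $(Q^*_n)$ a nonnegative real sequence with $Q^*_n \leq \frac{k^k}{(k+1)^{k+1}}$ for all $n$. Then the delay difference equation $\Delta y_n + Q^*_n y_{n-k} = 0$ has a positive solution; in particular it has a nonoscillatory solution. -/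
/-- (Győri–Ladas nonoscillation) If `Qₙ* ≤ kᵏ/(k+1)^{k+1}` for all `n`, the delay
difference equation `Δ yₙ + Qₙ* y_{n-k} = 0` has a positive solution. -/
theorem stmt_9 (k : ℕ) (hk : 1 ≤ k) (Q : ℤ → ℝ) (hQ : ∀ n, 0 ≤ Q n)
    (hbd : ∀ n, Q n ≤ (k : ℝ) ^ k / ((k : ℝ) + 1) ^ (k + 1)) :
    ∃ y : ℤ → ℝ,
      (∀ n : ℤ, y (n + 1) - y n + Q n * y (n - k) = 0) ∧
      (∀ n, 0 < y n) := by
  have hk0 : (0:ℝ) < (k:ℝ) := by exact_mod_cast Nat.pos_of_ne_zero (by omega)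
  have hk1 : (0:ℝ) < (k:ℝ) + 1 := by positivity
  set c : ℝ := (k:ℝ) / ((k:ℝ) + 1) with hc_def
  have hc0 : 0 < c := div_pos hk0 hk1
  have hc1 : c < 1 := (div_lt_one hk1).mpr (by linarith)
  haveI : Fact (c ≤ 1) := ⟨hc1.le⟩
  -- The bound equals c^k * (1 - c)
  have hbd' : ∀ n, Q n ≤ c ^ k * (1 - c) := by
    intro n
    refine (hbd n).trans_eq ?_
    rw [hc_def]
    rw [div_pow, pow_succ]
    field_simp
    ring
  -- product of k previous values
  set P : (ℤ → Set.Icc c 1) → ℤ → ℝ :=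
    fun l n => ∏ i ∈ Finset.range k, (l (n - 1 - i) : ℝ) with hP_def
  have hPlb : ∀ l n, c ^ k ≤ P l n := by
    intro l n
    simp only [hP_def]
    calc c ^ k = ∏ _i ∈ Finset.range k, c := by
          rw [Finset.prod_const, Finset.card_range]
      _ ≤ _ := Finset.prod_le_prod (fun i _ => hc0.le) (fun i _ => (l (n - 1 - i)).2.1)
  have hPpos : ∀ l n, 0 < P l n := fun l n => lt_of_lt_of_le (by positivity) (hPlb l n)
  have hQP : ∀ l n, Q n / P l n ≤ 1 - c := by
    intro l n
    calc Q n / P l n ≤ (c ^ k * (1 - c)) / c ^ k := by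
          have h1c : (0:ℝ) ≤ 1 - c := by linarith
          exact div_le_div₀ (mul_nonneg (by positivity) h1c) (hbd' n) (by positivity) (hPlb l n)
      _ = 1 - c := by field_simp
  -- the monotone operator
  have hmem : ∀ l n, (1 - Q n / P l n) ∈ Set.Icc c 1 := by
    intro l n
    constructor
    · have := hQP l n; linarith
    · have : 0 ≤ Q n / P l n := div_nonneg (hQ n) (hPpos l n).le
      linarith
  set T : (ℤ → Set.Icc c 1) →o (ℤ → Set.Icc c 1) :=
    ⟨fun l n => ⟨1 - Q n / P l n, hmem l n⟩, by
      intro l m hlm n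
      simp only [Subtype.mk_le_mk]
      have hP : P l n ≤ P m n := by
        simp only [hP_def]
        refine Finset.prod_le_prod (fun i _ => ?_) (fun i _ => ?_)
        · exact le_trans hc0.le (l (n-1-(i:ℤ))).2.1
        · exact hlm (n - 1 - (i:ℤ))
      have : Q n / P m n ≤ Q n / P l n :=
        div_le_div_of_nonneg_left (hQ n) (hPpos l n) hP
      linarith⟩ with hT_def
  set L : ℤ → Set.Icc c 1 := OrderHom.lfp T with hL_def
  have hfix : T L = L := OrderHom.map_lfp T
  set lam : ℤ → ℝ := fun n => (L n : ℝ) with hlam_def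
  have hlamlb : ∀ n, c ≤ lam n := fun n => (L n).2.1
  have hlampos : ∀ n, 0 < lam n := fun n => lt_of_lt_of_le hc0 (hlamlb n)
  have hlamfix : ∀ n, lam n = 1 - Q n / P L n := by
    intro n
    conv_lhs => rw [hlam_def, ← hfix]
    rfl
  -- define y
  set y : ℤ → ℝ := fun n =>
    if 0 ≤ n then ∏ j ∈ Finset.range n.toNat, lam j
    else (∏ j ∈ Finset.range (-n).toNat, lam (n + j))⁻¹ with hy_def
  have hypos : ∀ n, 0 < y n := by
    intro n
    simp only [hy_def]
    split
    · exact Finset.prod_pos (fun i _ => hlampos i)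
    · exact inv_pos.mpr (Finset.prod_pos (fun i _ => hlampos _))
  -- step lemma
  have hstep : ∀ n : ℤ, y (n + 1) = lam n * y n := by
    intro n
    rcases le_or_gt 0 n with hn | hn
    · have h1 : (0:ℤ) ≤ n + 1 := by omega
      have h2 : (n+1).toNat = n.toNat + 1 := by omega
      simp only [hy_def]
      simp only [hn, h1, if_true]
      rw [h2, Finset.prod_range_succ, Int.toNat_of_nonneg hn]
      ring
    · rcases eq_or_lt_of_le (by omega : n + 1 ≤ 0) with h0 | h0
      · have hn1 : n = -1 := by omega
        subst hn1
        simp only [hy_def]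
        norm_num
        rw [mul_inv_cancel₀ (hlampos (-1)).ne']
      · have hne : ¬ (0:ℤ) ≤ n + 1 := by omega
        have hne' : ¬ (0:ℤ) ≤ n := by omega
        simp only [hy_def]
        simp only [hne, hne', if_false]
        have hm : (-n).toNat = (-(n+1)).toNat + 1 := by omega
        rw [hm, Finset.prod_range_succ']
        have hA : ∏ j ∈ Finset.range (-(n+1)).toNat, lam (n + ((j:ℕ)+1:ℕ)) =
            ∏ j ∈ Finset.range (-(n+1)).toNat, lam ((n+1) + (j:ℤ)) :=
          Finset.prod_congr rfl (fun j _ => by congr 1; push_cast; ring)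
        rw [hA]
        have h00 : lam (n + ((0:ℕ):ℤ)) = lam n := by norm_num
        rw [h00, mul_inv]
        have hcalc : lam n * ((∏ j ∈ Finset.range (-(n+1)).toNat, lam ((n+1) + (j:ℤ)))⁻¹ * (lam n)⁻¹)
            = (lam n * (lam n)⁻¹) * (∏ j ∈ Finset.range (-(n+1)).toNat, lam ((n+1) + (j:ℤ)))⁻¹ := by
          ring
        rw [hcalc, mul_inv_cancel₀ (hlampos n).ne', one_mul]
  -- chain lemma
  have hchain : ∀ (j : ℕ) (n : ℤ),
      y n = (∏ i ∈ Finset.range j, lam (n - 1 - i)) * y (n - j) := by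
    intro j
    induction j with
    | zero => intro n; simp
    | succ j ih =>
      intro n
      rw [Finset.prod_range_succ]
      have h1 : y (n - (j:ℤ)) = lam (n - 1 - j) * y (n - ((j:ℕ)+1:ℕ)) := by
        have := hstep (n - ((j:ℤ) + 1))
        have e1 : n - ((j:ℤ)+1) + 1 = n - j := by ring
        have e2 : n - 1 - (j:ℤ) = n - ((j:ℤ)+1) := by ring
        have e3 : (n - (((j:ℕ)+1:ℕ)):ℤ) = n - ((j:ℤ)+1) := by push_cast; ring
        rw [e1] at this
        rw [this, e2, e3]
      rw [ih n, h1]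
      ring
  refine ⟨y, ?_, hypos⟩
  intro n
  have hP0 : P L n ≠ 0 := (hPpos L n).ne'
  have hyP : y n = P L n * y (n - k) := hchain k n
  rw [hstep n, hyP, hlamfix n]
  field_simp
  ring
end

section
/- Let $(a_n), (b_n)$ be real sequences with $a_n > 0$ and $b_n < 0$, $k \geq 1$, $\alpha_n = \prod_{j=n_0}^{n-1} a_j^{-1}$, and $Q^*_n = -\alpha_{n+1} b_n / \alpha_{n-k}$. If $\liminf_{n\to\infty} \sum_{j=n-k}^{n-1} Q^*_j > \left(\frac{k}{k+1}\right)^{k+1}$, then every solution of $z_{n+1} = a_n z_n + b_n z_{n-k}$ is oscillatory. -/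
/-- Unweighted AM-GM for a finset of nonnegative reals. -/
private lemma amgm_card {ι : Type*} (s : Finset ι) (t : ι → ℝ) (m : ℕ) (hm : m ≠ 0)
    (hcard : s.card = m) (ht : ∀ i ∈ s, 0 ≤ t i) :
    ∏ i ∈ s, t i ≤ ((∑ i ∈ s, t i) / m) ^ m := by
  have hm0 : (0:ℝ) < m := by exact_mod_cast Nat.pos_of_ne_zero hm
  have hw : ∑ _i ∈ s, (m:ℝ)⁻¹ = 1 := by
    rw [Finset.sum_const, hcard, nsmul_eq_mul]
    field_simp
  have h := Real.geom_mean_le_arith_mean_weighted s (fun _ => (m:ℝ)⁻¹) t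
      (fun i _ => by positivity) hw ht
  rw [Real.finset_prod_rpow s t ht] at h
  have h2 : ∑ i ∈ s, (m:ℝ)⁻¹ * t i = (∑ i ∈ s, t i) / m := by
    rw [← Finset.mul_sum]; ring
  rw [h2] at h
  have h3 := pow_le_pow_left₀ (Real.rpow_nonneg (Finset.prod_nonneg ht) _) h m
  rwa [Real.rpow_inv_natCast_pow (Finset.prod_nonneg ht) hm] at h3

private lemma poly_bound (k : ℕ) (x : ℝ) (hx0 : 0 ≤ x) (hx1 : x ≤ 1) :
    (k:ℝ) * x * (1-x)^k ≤ ((k:ℝ)/((k:ℝ)+1))^(k+1) := by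
  have h := amgm_card (Finset.range (k+1)) (fun i => if i = 0 then (k:ℝ)*x else 1-x)
      (k+1) (Nat.succ_ne_zero k) (Finset.card_range _)
      (fun i _ => by split <;> [positivity; linarith])
  rw [Finset.prod_range_succ', Finset.sum_range_succ'] at h
  simp only [Nat.succ_ne_zero, if_false, if_pos rfl, Finset.prod_const, Finset.sum_const,
    Finset.card_range, smul_eq_mul] at h
  have hsum : ((k:ℝ) * (1-x) + (k:ℝ)*x) / ((k:ℕ)+1 : ℕ) = (k:ℝ)/((k:ℝ)+1) := by
    push_cast; ring_nf
  calc (k:ℝ) * x * (1-x)^k = (1-x)^k * ((k:ℝ)*x) := by ring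
    _ ≤ (((k:ℝ) * (1-x) + (k:ℝ)*x) / ((k+1:ℕ):ℝ)) ^ (k+1) := by
        convert h using 2 <;> push_cast <;> ring
    _ = ((k:ℝ)/((k:ℝ)+1))^(k+1) := by push_cast; ring_nf

private lemma osc_main (k : ℕ) (hk : 1 ≤ k) (Q y : ℤ → ℝ) (N : ℤ)
    (hQ : ∀ n : ℤ, N ≤ n → 0 < Q n)
    (hpos : ∀ n : ℤ, N ≤ n → 0 < y n)
    (hrec : ∀ n : ℤ, N + k ≤ n → y (n + 1) = y n - Q n * y (n - k))
    (c : ℝ) (hc : ((k:ℝ)/((k:ℝ)+1))^(k+1) < c)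
    (hS : ∀ n : ℤ, N + k ≤ n → c ≤ ∑ j ∈ Finset.Ico (n - (k:ℤ)) n, Q j) : False := by
  have hkR : (0:ℝ) < k := by exact_mod_cast hk
  set κ : ℝ := ((k:ℝ)/((k:ℝ)+1))^(k+1) with hκdef
  have hκ0 : 0 < κ := pow_pos (div_pos hkR (by linarith)) _
  have hc0 : 0 < c := hκ0.trans hc
  set q : ℝ := c / κ with hqdef
  have hq1 : 1 < q := (one_lt_div hκ0).mpr hc
  -- y is monotone decreasing from N + k on
  have mono' : ∀ m : ℤ, N + k ≤ m → ∀ j : ℕ, y (m + j) ≤ y m := by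
    intro m hm j
    induction j with
    | zero => simp
    | succ j ih =>
      have h2 := hrec (m + j) (by omega)
      have h3 := mul_pos (hQ (m + j) (by omega)) (hpos (m + j - k) (by omega))
      have h4 : y (m + (j:ℤ) + 1) ≤ y (m + (j:ℤ)) := by linarith
      have e : m + ((j+1:ℕ):ℤ) = m + (j:ℤ) + 1 := by push_cast; ring
      rw [e]
      exact le_trans h4 ih
  have mono : ∀ m : ℤ, N + k ≤ m → ∀ n : ℤ, m ≤ n → y n ≤ y m := by
    intro m hm n hn
    have h := mono' m hm (n - m).toNat
    rwa [show m + ((n - m).toNat : ℤ) = n by omega] at h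
  -- the key improvement step
  have key : ∀ R : ℝ, 1 ≤ R → ∀ N' : ℤ, N + k ≤ N' →
      (∀ n : ℤ, N' ≤ n → R * y n ≤ y (n - k)) →
      R * c < k ∧ ∀ n : ℤ, N' + k ≤ n → (q * R) * y n ≤ y (n - k) := by
    intro R hR N' hN' hrat
    have step1 : ∀ j : ℤ, N' ≤ j → y (j+1) ≤ (1 - R * Q j) * y j := by
      intro j hj
      have h1 := hrec j (by omega)
      have h2 := hrat j hj
      have h3 := (hQ j (by omega)).le
      nlinarith [mul_le_mul_of_nonneg_left h2 h3]
    have tpos : ∀ j : ℤ, N' ≤ j → 0 < 1 - R * Q j := by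
      intro j hj
      have h1 := hpos (j+1) (by omega)
      have h2 := hpos j (by omega)
      have h3 := step1 j hj
      nlinarith
    have card_eq : ∀ n : ℤ, (Finset.Ico (n - (k:ℤ)) n).card = k := by
      intro n
      rw [Int.card_Ico]
      omega
    have sum_t : ∀ n : ℤ, ∑ j ∈ Finset.Ico (n - (k:ℤ)) n, (1 - R * Q j)
        = (k:ℝ) - R * ∑ j ∈ Finset.Ico (n - (k:ℤ)) n, Q j := by
      intro n
      rw [Finset.sum_sub_distrib, Finset.sum_const, card_eq, Finset.mul_sum, nsmul_eq_mul,
        mul_one]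
    have hRS : ∀ n : ℤ, N' + k ≤ n →
        R * (∑ j ∈ Finset.Ico (n - (k:ℤ)) n, Q j) < k := by
      intro n hn
      have hne : (Finset.Ico (n - (k:ℤ)) n).Nonempty := by
        rw [Finset.nonempty_Ico]; omega
      have hpos' : 0 < ∑ j ∈ Finset.Ico (n - (k:ℤ)) n, (1 - R * Q j) := by
        refine Finset.sum_pos (fun j hj => tpos j ?_) hne
        rw [Finset.mem_Ico] at hj; omega
      rw [sum_t n] at hpos'
      linarith
    have hRc : R * c < k := by
      have h1 := hRS (N' + k) le_rfl
      have h2 := hS (N' + k) (by omega)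
      nlinarith
    constructor
    · exact hRc
    -- telescoping product
    have telescope : ∀ m : ℕ, ∀ p : ℤ, N' ≤ p →
        y (p + m) ≤ (∏ j ∈ Finset.Ico p (p + (m:ℤ)), (1 - R * Q j)) * y p := by
      intro m
      induction m with
      | zero => intro p hp; simp
      | succ m ih =>
        intro p hp
        have h1 : y (p + (m:ℤ) + 1) ≤ (1 - R * Q (p + (m:ℤ))) * y (p + (m:ℤ)) :=
          step1 _ (by omega)
        have h2 := ih p hp
        have h3 : (0:ℝ) ≤ 1 - R * Q (p + (m:ℤ)) := (tpos _ (by omega)).le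
        have h4 : Finset.Ico p (p + ((m+1:ℕ):ℤ)) = insert (p + (m:ℤ)) (Finset.Ico p (p + (m:ℤ))) := by
          ext x
          simp only [Finset.mem_Ico, Finset.mem_insert]
          omega
        have h5 : p + (m:ℤ) ∉ Finset.Ico p (p + (m:ℤ)) := by
          simp [Finset.mem_Ico]
        calc y (p + ((m+1:ℕ):ℤ)) = y (p + (m:ℤ) + 1) := by norm_num; ring_nf
          _ ≤ (1 - R * Q (p + (m:ℤ))) * y (p + (m:ℤ)) := h1
          _ ≤ (1 - R * Q (p + (m:ℤ))) * ((∏ j ∈ Finset.Ico p (p + (m:ℤ)), (1 - R * Q j)) * y p) := by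
              apply mul_le_mul_of_nonneg_left h2 h3
          _ = (∏ j ∈ Finset.Ico p (p + ((m+1:ℕ):ℤ)), (1 - R * Q j)) * y p := by
              rw [h4, Finset.prod_insert h5]; ring
    -- now the improved ratio
    intro n hn
    have hpN : N' ≤ n - k := by omega
    have hyp := hpos (n - k) (by omega)
    have hyn := hpos n (by omega)
    have htel := telescope k (n - k) hpN
    rw [show (n - (k:ℤ)) + (k:ℤ) = n by ring] at htel
    -- AM-GM bound on the product
    have hAM := amgm_card (Finset.Ico (n - (k:ℤ)) n) (fun j => 1 - R * Q j) k
        (by omega) (card_eq n)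
        (fun j hj => by
          rw [Finset.mem_Ico] at hj
          exact (tpos j (by omega)).le)
    rw [sum_t n] at hAM
    have hSn := hS n (by omega)
    have hAMnonneg : (0:ℝ) ≤ ((k:ℝ) - R * ∑ j ∈ Finset.Ico (n - (k:ℤ)) n, Q j) / k := by
      have h := hRS n (by omega)
      apply div_nonneg _ hkR.le
      linarith
    have hAMle : ((k:ℝ) - R * ∑ j ∈ Finset.Ico (n - (k:ℤ)) n, Q j) / k ≤ 1 - R * c / k := by
      rw [div_le_iff₀ hkR]
      have h1 : R * c ≤ R * ∑ j ∈ Finset.Ico (n - (k:ℤ)) n, Q j :=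
        mul_le_mul_of_nonneg_left hSn (by linarith)
      have h2 : (1 - R * c / k) * k = k - R * c := by field_simp
      linarith
    have hprod_le : (∏ j ∈ Finset.Ico (n - (k:ℤ)) n, (1 - R * Q j)) ≤ (1 - R * c / k)^k :=
      le_trans hAM (pow_le_pow_left₀ hAMnonneg hAMle k)
    have h5 : y n ≤ (1 - R * c / k)^k * y (n - k) := by
      calc y n ≤ (∏ j ∈ Finset.Ico (n - (k:ℤ)) n, (1 - R * Q j)) * y (n - k) := htel
        _ ≤ (1 - R * c / k)^k * y (n - k) := mul_le_mul_of_nonneg_right hprod_le hyp.le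
    -- polynomial bound
    have hx0 : (0:ℝ) ≤ R * c / k := by positivity
    have hx1 : R * c / k ≤ 1 := by rw [div_le_one hkR]; linarith
    have h6 := poly_bound k (R * c / k) hx0 hx1
    have h6' : c * R * (1 - R * c / k)^k ≤ κ := by
      have : (k:ℝ) * (R * c / k) = c * R := by field_simp
      rw [this] at h6
      convert h6 using 2
    have hcR : (0:ℝ) < c * R := by nlinarith
    have hnum : c * R * y n ≤ κ * y (n - k) := by
      calc c * R * y n ≤ c * R * ((1 - R * c / k)^k * y (n - k)) :=
            mul_le_mul_of_nonneg_left h5 hcR.le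
        _ = (c * R * (1 - R * c / k)^k) * y (n - k) := by ring
        _ ≤ κ * y (n - k) := mul_le_mul_of_nonneg_right h6' hyp.le
    have hfin : (q * R * y n) * κ ≤ (y (n - k)) * κ := by
      have e : (q * R * y n) * κ = c * R * y n := by
        rw [hqdef]; field_simp
      rw [e]; linarith
    exact le_of_mul_le_mul_right hfin hκ0
  -- iterate
  have good : ∀ m : ℕ, ∀ n : ℤ, N + k + k + k * (m:ℤ) ≤ n → q^m * y n ≤ y (n - k) := by
    intro m
    induction m with
    | zero =>
      intro n hn
      norm_num at hn
      simpa using mono (n - k) (by omega) n (by omega)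
    | succ m ih =>
      have hkm : (0:ℤ) ≤ (k:ℤ) * (m:ℤ) := by positivity
      have h := key (q^m) (one_le_pow₀ hq1.le) (N + k + k + k * (m:ℤ)) (by omega)
        (fun n hn => ih n hn)
      intro n hn
      have h2 := h.2 n (by
        push_cast at hn ⊢
        have e : (k:ℤ) * ((m:ℤ) + 1) = (k:ℤ) * (m:ℤ) + k := by ring
        omega)
      rw [pow_succ']
      exact h2
  obtain ⟨m, hm⟩ := pow_unbounded_of_one_lt ((k:ℝ)/c) hq1
  have hkm : (0:ℤ) ≤ (k:ℤ) * (m:ℤ) := by positivity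
  have h := key (q^m) (one_le_pow₀ hq1.le) (N + k + k + k * (m:ℤ)) (by omega)
    (fun n hn => good m n hn)
  have h1 := h.1
  rw [div_lt_iff₀ hc0] at hm
  linarith

/-- Ladas–Philos–Sficas-type criterion for `z_{n+1} = aₙ zₙ + bₙ z_{n-k}`. -/
theorem stmt_12 (n0 : ℤ) (k : ℕ) (hk : 1 ≤ k) (a b : ℤ → ℝ)
    (ha : ∀ n, 0 < a n) (hb : ∀ n, b n < 0)
    (α Qs : ℤ → ℝ)
    (hα : ∀ n, α n = ∏ j ∈ Finset.Ico n0 n, (a j)⁻¹)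
    (hQs : ∀ n, Qs n = -(α (n + 1) * b n / α (n - k)))
    (hlim : ((k : ℝ) / ((k : ℝ) + 1)) ^ (k + 1) <
      Filter.liminf (fun n : ℤ => ∑ j ∈ Finset.Ico (n - k) n, Qs j) Filter.atTop)
    (z : ℤ → ℝ)
    (heq : ∀ n : ℤ, z (n + 1) = a n * z n + b n * z (n - k))
    (hne : ∃ n, z n ≠ 0) :
    ∀ M : ℤ, ∃ n, M ≤ n ∧ z n * z (n + 1) ≤ 0 := by
  by_contra hcon
  push_neg at hcon
  obtain ⟨M, hM⟩ := hcon
  -- positivity of α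
  have hα_pos : ∀ n, 0 < α n := fun n => by
    rw [hα]; exact Finset.prod_pos (fun j _ => inv_pos.mpr (ha j))
  have hQpos : ∀ n : ℤ, 0 < Qs n := by
    intro n
    rw [hQs]
    have h1 := hα_pos (n+1)
    have h2 := hα_pos (n - k)
    have h3 := hb n
    have : α (n+1) * b n / α (n - k) < 0 :=
      div_neg_of_neg_of_pos (mul_neg_of_pos_of_neg h1 h3) h2
    linarith
  -- sign constancy
  have hzM : z M ≠ 0 := by
    intro h0
    have := hM M le_rfl
    rw [h0] at this
    simp at this
  set σ : ℝ := if 0 < z M then 1 else -1 with hσdef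
  have hσ2 : σ * σ = 1 := by
    by_cases h : 0 < z M <;> simp [hσdef, h]
  have hσzM : 0 < σ * z M := by
    by_cases h : 0 < z M
    · simp [hσdef, h]
    · have hlt : z M < 0 := lt_of_le_of_ne (not_lt.mp h) hzM
      simp [hσdef, h]
      linarith
  have hσz' : ∀ j : ℕ, 0 < σ * z (M + j) := by
    intro j
    induction j with
    | zero => simpa using hσzM
    | succ j ih =>
      have hp := hM (M + (j:ℤ)) (by omega)
      have e : σ * z (M + (j:ℤ)) * (σ * z (M + (j:ℤ) + 1))
          = σ * σ * (z (M + (j:ℤ)) * z (M + (j:ℤ) + 1)) := by ring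
      rw [hσ2, one_mul] at e
      have e2 : M + ((j+1:ℕ):ℤ) = M + (j:ℤ) + 1 := by push_cast; ring
      rw [e2]
      by_contra hcon2
      push_neg at hcon2
      nlinarith [mul_nonpos_of_nonneg_of_nonpos ih.le hcon2]
  have hσz : ∀ n : ℤ, M ≤ n → 0 < σ * z n := by
    intro n hn
    have h := hσz' (n - M).toNat
    rwa [show M + ((n - M).toNat : ℤ) = n by omega] at h
  -- the transformed solution
  set y : ℤ → ℝ := fun n => σ * (α n * z n) with hydef
  have hy_pos : ∀ n : ℤ, M ≤ n → 0 < y n := by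
    intro n hn
    have := mul_pos (hα_pos n) (hσz n hn)
    rw [hydef]
    dsimp only
    nlinarith
  have hy_rec : ∀ n : ℤ, n0 ≤ n → y (n + 1) = y n - Qs n * y (n - k) := by
    intro n hn
    have hins : Finset.Ico n0 (n+1) = insert n (Finset.Ico n0 n) := by
      ext x
      simp only [Finset.mem_Ico, Finset.mem_insert]
      omega
    have hnotmem : n ∉ Finset.Ico n0 n := by simp
    have e1 : α (n+1) = (a n)⁻¹ * α n := by
      rw [hα, hα, hins, Finset.prod_insert hnotmem]
    have hane : a n ≠ 0 := (ha n).ne'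
    have hαne : α (n - k) ≠ 0 := (hα_pos (n - k)).ne'
    rw [hydef]
    dsimp only
    rw [heq n, hQs n, e1]
    field_simp
    ring
  -- extract the constant from the liminf
  set u : ℤ → ℝ := fun n => ∑ j ∈ Finset.Ico (n - (k:ℤ)) n, Qs j with hudef
  set κ : ℝ := ((k:ℝ)/((k:ℝ)+1))^(k+1) with hκdef
  have hκ0 : (0:ℝ) ≤ κ := by positivity
  have hexists : ∃ c : ℝ, κ < c ∧ ∀ᶠ n in Filter.atTop, c ≤ u n := by
    have hlim' : κ < sSup {a : ℝ | ∀ᶠ n in Filter.atTop, a ≤ u n} := by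
      rw [← Filter.liminf_eq]
      exact hlim
    by_cases hB : BddAbove {a : ℝ | ∀ᶠ n in Filter.atTop, a ≤ u n}
    · have hne' : {a : ℝ | ∀ᶠ n in Filter.atTop, a ≤ u n}.Nonempty := by
        by_contra hemp
        rw [Set.not_nonempty_iff_eq_empty] at hemp
        rw [hemp, Real.sSup_empty] at hlim'
        linarith
      obtain ⟨c, hcT, hc⟩ := exists_lt_of_lt_csSup hne' hlim'
      exact ⟨c, hc, hcT⟩
    · rw [not_bddAbove_iff] at hB
      obtain ⟨c, hcT, hc⟩ := hB κ
      exact ⟨c, hc, hcT⟩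
  obtain ⟨c, hcκ, hev⟩ := hexists
  rw [Filter.eventually_atTop] at hev
  obtain ⟨N2, hN2⟩ := hev
  set N : ℤ := max (max M n0) N2 with hNdef
  have hMN : M ≤ N := le_trans (le_max_left M n0) (le_max_left _ N2)
  have hn0N : n0 ≤ N := le_trans (le_max_right M n0) (le_max_left _ N2)
  have hN2N : N2 ≤ N := le_max_right _ N2
  exact osc_main k hk Qs y N
    (fun n _ => hQpos n)
    (fun n hn => hy_pos n (le_trans hMN hn))
    (fun n hn => hy_rec n (by omega))
    c hcκ
    (fun n hn => hN2 n (by omega))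
end

section
/- Let $(a_n), (b_n)$ be real sequences with $a_n > 0$ and $b_n > 0$, $\ell \geq 2$, $\alpha_n = \prod_{j=n_0}^{n-1} a_j^{-1}$, and $Q_n = \alpha_{n+1} b_n / \alpha_{n+\ell}$. If $\liminf_{n\to\infty} \sum_{s=n+1}^{n+\ell-1} Q_s > \left(\frac{\ell-1}{\ell}\right)^{\ell}$ or $\limsup_{n\to\infty} \sum_{s=n}^{n+\ell-1} Q_s > 1$, then every solution of the advanced equation $z_{n+1} = a_n z_n + b_n z_{n+\ell}$ is oscillatory. -/
open Finset Filter

/-- Unweighted AM-GM. -/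
lemma my_amgm (s : Finset ℤ) (f : ℤ → ℝ) (k : ℕ) (hcard : s.card = k) (hk : 0 < k)
    (hf : ∀ i ∈ s, 0 ≤ f i) :
    ∏ i ∈ s, f i ≤ ((∑ i ∈ s, f i) / k) ^ k := by
  have hk' : (k : ℝ) ≠ 0 := Nat.cast_ne_zero.2 hk.ne'
  have h1 : ∏ i ∈ s, f i ^ ((1 : ℝ)/k) ≤ ∑ i ∈ s, (1/k : ℝ) * f i := by
    apply Real.geom_mean_le_arith_mean_weighted s (fun _ => (1:ℝ)/k) f
      (fun i _ => by positivity)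
    · rw [Finset.sum_const, hcard, nsmul_eq_mul]; field_simp
    · exact hf
  have h2 : ∑ i ∈ s, (1/k : ℝ) * f i = (∑ i ∈ s, f i) / k := by
    rw [← Finset.mul_sum]; ring
  have h3 : ∀ i ∈ s, (f i ^ ((1:ℝ)/k)) ^ k = f i := by
    intro i hi
    rw [← Real.rpow_natCast (f i ^ ((1:ℝ)/k)) k, ← Real.rpow_mul (hf i hi)]
    simp [hk']
  calc ∏ i ∈ s, f i = ∏ i ∈ s, (f i ^ ((1:ℝ)/k)) ^ k := by
        exact (Finset.prod_congr rfl h3).symm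
    _ = (∏ i ∈ s, f i ^ ((1:ℝ)/k)) ^ k := by rw [Finset.prod_pow]
    _ ≤ ((∑ i ∈ s, f i) / k) ^ k := by
        rw [← h2]
        exact pow_le_pow_left₀ (Finset.prod_nonneg fun i hi => Real.rpow_nonneg (hf i hi) _)
          (h1.trans_eq rfl) k

/-- Key elementary inequality. -/
lemma my_bern (k : ℕ) (hk : 1 ≤ k) (u : ℝ) (h0 : 0 ≤ u) (h1 : u ≤ 1) :
    (k : ℝ) * u ^ k * (1 - u) ≤ ((k : ℝ) / (k + 1)) ^ (k + 1) := by
  have hkR : (1:ℝ) ≤ (k:ℝ) := by exact_mod_cast hk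
  rcases eq_or_lt_of_le h0 with h0' | h0'
  · rw [← h0']
    have : (0:ℝ) ^ k = 0 := zero_pow (by omega)
    rw [this]
    have hpos : (0:ℝ) ≤ ((k : ℝ) / (k + 1)) ^ (k + 1) := by positivity
    simpa using hpos
  · set t : ℝ := u * ((k:ℝ)+1) / k with ht_def
    have ht : 0 < t := by positivity
    have sub : t ^ k * (((k:ℝ)+1) - k * t) ≤ 1 := by
      rcases le_or_gt (((k:ℝ)+1) - k * t) 0 with hneg | hpos
      · exact (mul_nonpos_of_nonneg_of_nonpos (by positivity) hneg).trans zero_le_one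
      · have hber : 1 + (k:ℝ) * (1/t - 1) ≤ (1/t) ^ k := by
          have := one_add_mul_le_pow (a := 1/t - 1) (by nlinarith [one_div_pos.2 ht]) k
          simpa using this
        have hstep : ((k:ℝ)+1) - k * t ≤ 1 + (k:ℝ) * (1/t - 1) := by
          have htv : t * (1/t) = 1 := by field_simp
          nlinarith [sq_nonneg (1 - t), mul_pos ht (one_div_pos.2 ht), one_div_pos.2 ht]
        calc t ^ k * (((k:ℝ)+1) - k * t) ≤ t ^ k * (1/t) ^ k := by
              apply mul_le_mul_of_nonneg_left (hstep.trans hber) (by positivity)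
          _ = (t * (1/t)) ^ k := by rw [mul_pow]
          _ = 1 := by rw [mul_one_div_cancel ht.ne']; exact one_pow k
    have hkpos : (0:ℝ) < k := by linarith
    have hk1 : (0:ℝ) < (k:ℝ)+1 := by linarith
    rw [div_pow, le_div_iff₀ (by positivity)]
    have key : (k:ℝ) * u ^ k * (1 - u) * ((k:ℝ)+1) ^ (k+1)
        = (k:ℝ) ^ (k+1) * (t ^ k * (((k:ℝ)+1) - k * t)) := by
      have hexp : (u * ((k:ℝ)+1) / k) ^ k = u ^ k * ((k:ℝ)+1) ^ k / (k:ℝ) ^ k := by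
        rw [div_pow, mul_pow]
      rw [ht_def, hexp]
      field_simp
      ring
    rw [key]
    calc (k:ℝ) ^ (k+1) * (t ^ k * (((k:ℝ)+1) - k * t)) ≤ (k:ℝ) ^ (k+1) * 1 :=
          mul_le_mul_of_nonneg_left sub (by positivity)
      _ = (k:ℝ) ^ (k+1) := mul_one _

set_option maxHeartbeats 1000000 in
/-- Győri–Ladas-type criterion for the advanced equation `z_{n+1} = aₙ zₙ + bₙ z_{n+ℓ}`. -/
theorem stmt_13 (n0 : ℤ) (ℓ : ℕ) (hℓ : 2 ≤ ℓ) (a b : ℤ → ℝ)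
    (ha : ∀ n, 0 < a n) (hb : ∀ n, 0 < b n)
    (α Q : ℤ → ℝ)
    (hα : ∀ n, α n = ∏ j ∈ Finset.Ico n0 n, (a j)⁻¹)
    (hQ : ∀ n, Q n = α (n + 1) * b n / α (n + ℓ))
    (hlim :
      (((ℓ : ℝ) - 1) / (ℓ : ℝ)) ^ ℓ <
        Filter.liminf (fun n : ℤ => ∑ s ∈ Finset.Ico (n + 1) (n + ℓ), Q s) Filter.atTop ∨
      1 < Filter.limsup (fun n : ℤ => ∑ s ∈ Finset.Ico n (n + ℓ), Q s) Filter.atTop)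
    (z : ℤ → ℝ)
    (heq : ∀ n : ℤ, z (n + 1) = a n * z n + b n * z (n + ℓ))
    (hne : ∃ n, z n ≠ 0) :
    ∀ M : ℤ, ∃ n, M ≤ n ∧ z n * z (n + 1) ≤ 0 := by
  intro M
  by_contra hcon
  push_neg at hcon
  set N : ℤ := max M n0 with hN
  have hMN : M ≤ N := le_max_left _ _
  have hn0N : n0 ≤ N := le_max_right _ _
  have hα_pos : ∀ n, 0 < α n := by
    intro n; rw [hα]; exact Finset.prod_pos fun j _ => inv_pos.2 (ha j)
  have hQ_pos : ∀ n, 0 < Q n := by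
    intro n; rw [hQ]; exact div_pos (mul_pos (hα_pos _) (hb n)) (hα_pos _)
  have hα_succ : ∀ n, n0 ≤ n → α (n+1) * a n = α n := by
    intro n hn
    have hins : Finset.Ico n0 (n+1) = insert n (Finset.Ico n0 n) := by
      ext x; simp only [Finset.mem_Ico, Finset.mem_insert]; omega
    rw [hα, hα, hins, Finset.prod_insert (by simp [Finset.mem_Ico])]
    rw [mul_comm ((a n)⁻¹) _, mul_assoc, inv_mul_cancel₀ (ha n).ne', mul_one]
  set σ : ℝ := if 0 < z N then 1 else -1 with hσ
  have hzN : z N ≠ 0 := by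
    intro h; have := hcon N hMN; rw [h] at this; simp at this
  have hσzN : 0 < σ * z N := by
    rw [hσ]; split_ifs with h
    · simpa using h
    · have : z N < 0 := lt_of_le_of_ne (not_lt.1 h) hzN
      nlinarith
  have hσz : ∀ n, N ≤ n → 0 < σ * z n := by
    refine Int.le_induction hσzN ?_
    intro n hn ih
    have h1 := hcon n (hMN.trans hn)
    nlinarith [sq_nonneg (z n)]
  set y : ℤ → ℝ := fun n => σ * (α n * z n) with hy
  have hy_pos : ∀ n, N ≤ n → 0 < y n := by
    intro n hn
    have h1 := hσz n hn
    have h2 := hα_pos n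
    rw [hy]; dsimp only; nlinarith
  have hrec : ∀ n, N ≤ n → y (n+1) = y n + Q n * y (n + ℓ) := by
    intro n hn
    have h1 := hα_succ n (hn0N.trans hn)
    have h2 : Q n * α (n + ℓ) = α (n+1) * b n := by
      rw [hQ]; exact div_mul_cancel₀ _ (hα_pos (n + ℓ)).ne'
    rw [hy]; dsimp only
    rw [heq n]
    linear_combination (σ * z n) * h1 - (σ * z (n + ℓ)) * h2
  have hsum : ∀ A, N ≤ A → ∀ B, A ≤ B →
      y B = y A + ∑ s ∈ Finset.Ico A B, Q s * y (s + ℓ) := by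
    intro A hA
    refine Int.le_induction (by simp) ?_
    intro B hB ih
    have hins : Finset.Ico A (B+1) = insert B (Finset.Ico A B) := by
      ext x; simp only [Finset.mem_Ico, Finset.mem_insert]; omega
    rw [hins, Finset.sum_insert (by simp [Finset.mem_Ico]), hrec B (hA.trans hB), ih]
    ring
  have hyℓ : ∀ s, N ≤ s → 0 < y (s + ℓ) := fun s hs => hy_pos _ (by omega)
  have hmono : ∀ A, N ≤ A → ∀ B, A ≤ B → y A ≤ y B := by
    intro A hA B hB
    rw [hsum A hA B hB]
    have h : 0 ≤ ∑ s ∈ Finset.Ico A B, Q s * y (s + ℓ) :=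
      Finset.sum_nonneg fun s hs =>
        le_of_lt (mul_pos (hQ_pos s) (hyℓ s (hA.trans (Finset.mem_Ico.1 hs).1)))
    linarith
  have hLB : ∀ A B v, N ≤ A → A ≤ B → 0 ≤ v → (∀ s ∈ Finset.Ico A B, v ≤ y (s + ℓ)) →
      y A + (∑ s ∈ Finset.Ico A B, Q s) * v ≤ y B := by
    intro A B v hA hB hv hvs
    rw [hsum A hA B hB, Finset.sum_mul]
    have h : ∑ s ∈ Finset.Ico A B, Q s * v ≤ ∑ s ∈ Finset.Ico A B, Q s * y (s+ℓ) :=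
      Finset.sum_le_sum fun s hs => mul_le_mul_of_nonneg_left (hvs s hs) (hQ_pos s).le
    linarith
  rcases hlim with hlim | hlim
  · -- liminf case
    set k : ℕ := ℓ - 1 with hk
    have hk1 : 1 ≤ k := by omega
    have hkℓ : k + 1 = ℓ := by omega
    have hkR : (k : ℝ) = (ℓ : ℝ) - 1 := by
      have : ((k : ℕ) : ℝ) + 1 = (ℓ : ℝ) := by exact_mod_cast congrArg (Nat.cast (R := ℝ)) hkℓ
      linarith
    set S : ℤ → ℝ := fun n => ∑ s ∈ Finset.Ico (n + 1) (n + (ℓ:ℤ)), Q s with hS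
    set M₀ : ℝ := (((ℓ : ℝ) - 1) / (ℓ : ℝ)) ^ ℓ with hM₀
    have hℓR : (2:ℝ) ≤ (ℓ:ℝ) := by exact_mod_cast hℓ
    have hM₀pos : 0 < M₀ := by
      rw [hM₀]
      have h : 0 < ((ℓ : ℝ) - 1) / (ℓ : ℝ) := div_pos (by linarith) (by linarith)
      exact pow_pos h ℓ
    have hM₀eq : ((k : ℝ) / ((k:ℝ) + 1)) ^ (k + 1) = M₀ := by
      rw [hM₀, ← hkℓ]
      congr 1
      push_cast
      ring
    have hSnn : ∀ n, 0 ≤ S n := fun n =>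
      Finset.sum_nonneg fun s _ => (hQ_pos s).le
    have hbddS : Filter.IsBoundedUnder (· ≥ ·) Filter.atTop S :=
      Filter.isBoundedUnder_of ⟨0, fun n => hSnn n⟩
    set c : ℝ := (M₀ + Filter.liminf S Filter.atTop) / 2 with hc
    have hc1 : M₀ < c := by rw [hc]; linarith
    have hc2 : c < Filter.liminf S Filter.atTop := by rw [hc]; linarith
    have hcpos : 0 < c := hM₀pos.trans hc1
    obtain ⟨N₂, hN₂⟩ := Filter.eventually_atTop.1 (Filter.eventually_lt_of_lt_liminf hc2 hbddS)
    set N₂' : ℤ := max N₂ N with hN₂'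
    set w : ℤ → ℝ := fun n => y (n + (ℓ:ℤ)) / y (n + 1) with hw
    have hw1 : ∀ n, N ≤ n → 1 ≤ w n := by
      intro n hn
      rw [hw]; dsimp only
      rw [le_div_iff₀ (hy_pos (n+1) (by omega))]
      simpa using hmono (n+1) (by omega) (n + (ℓ:ℤ)) (by omega)
    set d : ℝ := (2/c)^2 with hd
    -- Step 1: frequently w ≤ d
    have hfreq : ∀ p : ℤ, ∃ m, p ≤ m ∧ w m ≤ d := by
      intro p
      set n : ℤ := max p N₂' with hn
      have hnN : N ≤ n := le_trans (le_max_right N₂ N) (le_max_right p N₂')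
      have hnN₂ : N₂ ≤ n := le_trans (le_max_left N₂ N) (le_max_right p N₂')
      have hScn : c ≤ S n := (hN₂ n hnN₂).le
      -- least m with prefix sum ≥ c/2
      obtain ⟨m, ⟨hm1, hm2, hm3⟩, hmin⟩ := Int.exists_least_of_bdd
        (P := fun m => n + 1 ≤ m ∧ m ≤ n + (ℓ:ℤ) - 1 ∧
          c/2 ≤ ∑ s ∈ Finset.Ico (n+1) (m+1), Q s)
        ⟨n + 1, fun m hm => hm.1⟩
        ⟨n + (ℓ:ℤ) - 1, by
          refine ⟨by omega, le_refl _, ?_⟩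
          have : Finset.Ico (n+1) (n + (ℓ:ℤ) - 1 + 1) = Finset.Ico (n+1) (n + (ℓ:ℤ)) := by
            congr 1; omega
          rw [this]
          calc c/2 ≤ c := by linarith
            _ ≤ S n := hScn⟩
      have hpre : ∑ s ∈ Finset.Ico (n+1) m, Q s < c/2 := by
        by_contra hge
        push_neg at hge
        rcases eq_or_lt_of_le hm1 with he | hlt
        · rw [← he] at hge
          simp at hge
          linarith
        · have := hmin (m - 1) ⟨by omega, by omega, by
            have : m - 1 + 1 = m := by ring
            rw [this]; exact hge⟩
          omega
      have hsuf : c/2 ≤ ∑ s ∈ Finset.Ico m (n + (ℓ:ℤ)), Q s := by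
        have hsplit : ∑ s ∈ Finset.Ico (n+1) m, Q s + ∑ s ∈ Finset.Ico m (n + (ℓ:ℤ)), Q s
            = S n := by
          rw [hS]; dsimp only
          rw [← Finset.sum_union (Finset.Ico_disjoint_Ico_consecutive _ _ _)]
          congr 1
          exact Finset.Ico_union_Ico_eq_Ico (by omega) (by omega)
        linarith
      have hymℓ := hy_pos (m + (ℓ:ℤ)) (by omega)
      have hym1 := hy_pos (m + 1) (by omega)
      -- (i)
      have h_i : c/2 * y (m + (ℓ:ℤ)) ≤ y (n + (ℓ:ℤ)) := by
        have h := hLB m (n + (ℓ:ℤ)) (y (m + (ℓ:ℤ))) (by omega) (by omega) hymℓ.le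
          (fun s hs => hmono (m + (ℓ:ℤ)) (by omega) (s + (ℓ:ℤ))
            (by have := (Finset.mem_Ico.1 hs).1; omega))
        have hym := hy_pos m (by omega)
        nlinarith [mul_le_mul_of_nonneg_right hsuf hymℓ.le]
      -- (ii)
      have h_ii : c/2 * y (n + 1 + (ℓ:ℤ)) ≤ y (m + 1) := by
        have h := hLB (n+1) (m+1) (y (n + 1 + (ℓ:ℤ))) (by omega) (by omega)
          (hy_pos (n + 1 + (ℓ:ℤ)) (by omega)).le
          (fun s hs => hmono (n + 1 + (ℓ:ℤ)) (by omega) (s + (ℓ:ℤ))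
            (by have := (Finset.mem_Ico.1 hs).1; omega))
        have hyn1 := hy_pos (n+1) (by omega)
        nlinarith [mul_le_mul_of_nonneg_right hm3 (hy_pos (n + 1 + (ℓ:ℤ)) (by omega)).le]
      have hch : y (n + (ℓ:ℤ)) ≤ y (n + 1 + (ℓ:ℤ)) := hmono _ (by omega) _ (by omega)
      refine ⟨m, by omega, ?_⟩
      rw [hw]; dsimp only
      rw [div_le_iff₀ hym1, hd]
      have hcc : (2/c)^2 * (c/2 * (c/2 * y (m + (ℓ:ℤ)))) = y (m + (ℓ:ℤ)) := by
        field_simp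
      nlinarith [mul_le_mul_of_nonneg_left
        (le_trans (mul_le_mul_of_nonneg_left (h_i.trans hch) (by positivity : (0:ℝ) ≤ c/2)) h_ii)
        (by positivity : (0:ℝ) ≤ (2/c)^2)]
    set r : ℝ := Filter.liminf w Filter.atTop with hr
    have hcob : Filter.IsCoboundedUnder (· ≥ ·) Filter.atTop w := by
      refine ⟨d, fun x hx => ?_⟩
      rw [Filter.eventually_map] at hx
      obtain ⟨p, hp⟩ := Filter.eventually_atTop.1 hx
      obtain ⟨m, hm, hmd⟩ := hfreq p
      exact le_trans (hp m hm) hmd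
    have hbdd_w : Filter.IsBoundedUnder (· ≥ ·) Filter.atTop w :=
      ⟨1, Filter.eventually_map.2 (Filter.eventually_atTop.2 ⟨N, hw1⟩)⟩
    have hr1 : 1 ≤ r :=
      Filter.le_liminf_of_le hcob (Filter.eventually_atTop.2 ⟨N, hw1⟩)
    have hM₀c : M₀ / c < 1 := (div_lt_one hcpos).2 hc1
    set ε : ℝ := min (1/2) ((1 - M₀/c)/2) with hε
    have hεpos : 0 < ε := by
      rw [hε]
      apply lt_min (by norm_num)
      linarith
    have hεhalf : ε ≤ 1/2 := min_le_left _ _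
    have hεM : ε ≤ (1 - M₀/c)/2 := min_le_right _ _
    set ρ : ℝ := r - ε with hρdef
    have hρ : 0 < ρ := by rw [hρdef]; linarith
    obtain ⟨N₃, hN₃⟩ := Filter.eventually_atTop.1
      (Filter.eventually_lt_of_lt_liminf (by rw [hρdef]; linarith : ρ < r) hbdd_w)
    set N₄ : ℤ := max N₃ N₂' with hN₄
    have hN₄N : N ≤ N₄ := le_trans (le_max_right N₂ N) (le_max_right N₃ N₂')
    set e : ℝ := ((k:ℝ) - ρ * c) / k with he
    have hkRpos : (0:ℝ) < (k:ℝ) := by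
      have : (1:ℝ) ≤ (k:ℝ) := by exact_mod_cast hk1
      linarith
    -- main estimate
    have claim : ∀ n, N₄ ≤ n → 0 < e ∧ 1 / e ^ k ≤ w n := by
      intro n hn
      have hnN : N ≤ n := hN₄N.trans hn
      set u : ℤ → ℝ := fun s => 1 - ρ * Q s with hu
      have hus : ∀ s ∈ Finset.Ico (n+1) (n + (ℓ:ℤ)), 0 < u s ∧ y s ≤ y (s+1) * u s := by
        intro s hs
        obtain ⟨hs1, hs2⟩ := Finset.mem_Ico.1 hs
        have hsN : N ≤ s := by omega
        have hws : ρ < w s := hN₃ s (by omega)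
        have hwlt : ρ * y (s + 1) < y (s + (ℓ:ℤ)) := by
          rw [hw] at hws; dsimp only at hws
          rw [lt_div_iff₀ (hy_pos (s+1) (by omega))] at hws
          linarith [hws]
        have hrs := hrec s hsN
        have hys1 := hy_pos (s+1) (by omega)
        have hmain : y s ≤ y (s+1) * u s := by
          rw [hu]; dsimp only
          nlinarith [mul_lt_mul_of_pos_left hwlt (hQ_pos s)]
        refine ⟨?_, hmain⟩
        have hys := hy_pos s hsN
        by_contra hneg
        push_neg at hneg
        nlinarith
      have hprod : ∀ B, n + 1 ≤ B → B ≤ n + (ℓ:ℤ) →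
          y (n+1) ≤ y B * ∏ s ∈ Finset.Ico (n+1) B, u s := by
        refine Int.le_induction (fun _ => by simp) ?_
        intro B hB ih hB1
        · have hBmem : B ∈ Finset.Ico (n+1) (n + (ℓ:ℤ)) := Finset.mem_Ico.2 ⟨hB, by omega⟩
          have hins : Finset.Ico (n+1) (B+1) = insert B (Finset.Ico (n+1) B) := by
            ext x; simp only [Finset.mem_Ico, Finset.mem_insert]; omega
          have hppos : 0 < ∏ s ∈ Finset.Ico (n+1) B, u s :=
            Finset.prod_pos fun s hs => (hus s (by
              obtain ⟨h1', h2'⟩ := Finset.mem_Ico.1 hs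
              exact Finset.mem_Ico.2 ⟨h1', by omega⟩)).1
          rw [hins, Finset.prod_insert (by simp [Finset.mem_Ico])]
          calc y (n+1) ≤ y B * ∏ s ∈ Finset.Ico (n+1) B, u s := ih (by omega)
            _ ≤ (y (B+1) * u B) * ∏ s ∈ Finset.Ico (n+1) B, u s :=
              mul_le_mul_of_nonneg_right (hus B hBmem).2 hppos.le
            _ = y (B+1) * (u B * ∏ s ∈ Finset.Ico (n+1) B, u s) := by ring
      have happ := hprod (n + (ℓ:ℤ)) (by omega) (le_refl _)
      have hcard : (Finset.Ico (n+1) (n + (ℓ:ℤ))).card = k := by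
        rw [Int.card_Ico]
        omega
      have hne' : (Finset.Ico (n+1) (n + (ℓ:ℤ))).Nonempty := by
        rw [← Finset.card_pos, hcard]; omega
      have hsum_pos : 0 < ∑ s ∈ Finset.Ico (n+1) (n + (ℓ:ℤ)), u s :=
        Finset.sum_pos (fun s hs => (hus s hs).1) hne'
      have hsum_u : ∑ s ∈ Finset.Ico (n+1) (n + (ℓ:ℤ)), u s = (k:ℝ) - ρ * S n := by
        rw [hu, hS]; dsimp only
        rw [Finset.sum_sub_distrib, Finset.sum_const, hcard, ← Finset.mul_sum]
        simp [nsmul_eq_mul]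
      have hScn : c ≤ S n := (hN₂ n (by omega)).le
      have hek : (∑ s ∈ Finset.Ico (n+1) (n + (ℓ:ℤ)), u s) / k ≤ e := by
        rw [hsum_u, he]
        refine (div_le_div_iff_of_pos_right hkRpos).2 ?_
        nlinarith
      have he_pos : 0 < e := lt_of_lt_of_le (div_pos hsum_pos hkRpos) hek
      have hprod_le : ∏ s ∈ Finset.Ico (n+1) (n + (ℓ:ℤ)), u s ≤ e ^ k := by
        calc ∏ s ∈ Finset.Ico (n+1) (n + (ℓ:ℤ)), u s
            ≤ ((∑ s ∈ Finset.Ico (n+1) (n + (ℓ:ℤ)), u s) / k) ^ k :=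
              my_amgm _ _ k hcard (by omega) (fun s hs => (hus s hs).1.le)
          _ ≤ e ^ k := pow_le_pow_left₀ (by positivity) hek k
      refine ⟨he_pos, ?_⟩
      rw [hw]; dsimp only
      rw [le_div_iff₀ (hy_pos (n+1) (by omega))]
      have hyl := hyℓ n hnN
      calc 1 / e ^ k * y (n + 1)
          ≤ 1 / e ^ k * (y (n + (ℓ:ℤ)) * e ^ k) := by
            apply mul_le_mul_of_nonneg_left ?_ (by positivity)
            calc y (n+1) ≤ y (n + (ℓ:ℤ)) * ∏ s ∈ Finset.Ico (n+1) (n + (ℓ:ℤ)), u s := happ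
              _ ≤ y (n + (ℓ:ℤ)) * e ^ k := mul_le_mul_of_nonneg_left hprod_le hyl.le
        _ = y (n + (ℓ:ℤ)) := by field_simp
    have he_pos : 0 < e := (claim N₄ (le_refl _)).1
    have hre : 1 / e ^ k ≤ r :=
      Filter.le_liminf_of_le hcob
        (Filter.eventually_atTop.2 ⟨N₄, fun n hn => (claim n hn).2⟩)
    have he1 : e ≤ 1 := by
      rw [he]
      rw [div_le_one hkRpos]
      nlinarith
    have hek1 : e ^ k ≤ 1 := pow_le_one₀ he_pos.le he1
    have hekpos : 0 < e ^ k := by positivity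
    have h1r : 1 ≤ r * e ^ k := by
      rw [div_le_iff₀ hekpos] at hre
      linarith [hre]
    -- Bernoulli application
    have hbern := my_bern k hk1 e he_pos.le he1
    have h1me : 1 - e = ρ * c / k := by
      rw [he]; field_simp; ring
    have hρc : ρ * c * e ^ k ≤ M₀ := by
      rw [h1me] at hbern
      rw [hM₀eq] at hbern
      calc ρ * c * e ^ k = (k:ℝ) * e ^ k * (ρ * c / k) := by field_simp
        _ ≤ M₀ := hbern
    have hρe : ρ * e ^ k ≤ M₀ / c := by
      rw [le_div_iff₀ hcpos]
      nlinarith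
    have hεe : ε * e ^ k ≤ ε := mul_le_of_le_one_right hεpos.le hek1
    have hexp : r * e ^ k = ρ * e ^ k + ε * e ^ k := by rw [hρdef]; ring
    linarith
  · -- limsup case
    have hT : ∀ n, N ≤ n → (∑ s ∈ Finset.Ico n (n + (ℓ:ℤ)), Q s) ≤ 1 := by
      intro n hn
      have h := hLB n (n + (ℓ:ℤ)) (y (n + (ℓ:ℤ))) hn (by omega) (hyℓ n hn).le
        (fun s hs => hmono (n + (ℓ:ℤ)) (by omega) (s + (ℓ:ℤ))
          (by have := (Finset.mem_Ico.1 hs).1; omega))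
      have hyp := hy_pos n hn
      have hypl := hyℓ n hn
      nlinarith
    have hcoT : Filter.IsCoboundedUnder (· ≤ ·) (Filter.atTop : Filter ℤ)
        (fun n => ∑ s ∈ Finset.Ico n (n + (ℓ:ℤ)), Q s) :=
      Filter.isCoboundedUnder_le_of_le Filter.atTop
        (fun n => Finset.sum_nonneg fun s _ => (hQ_pos s).le)
    have : Filter.limsup (fun n : ℤ => ∑ s ∈ Finset.Ico n (n + (ℓ:ℤ)), Q s) Filter.atTop ≤ 1 :=
      Filter.limsup_le_of_le hcoT (Filter.eventually_atTop.2 ⟨N, hT⟩)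
    linarith
end
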